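/- arXiv:math/9909193 — 3 statements merged into one kernel-verified Lean document; each statement's English description precedes it below -/
import Mathlib

section
/- Suppose γ: ℝⁿ × ℝᵏ → ℝⁿ is smooth near (x₀,0) with γ(x,0) ≡ x, and admits the exponential representation γ(x,t) = exp(∑_{0<|α|≤N} t^α X_α/α!)(x) + O(|t|^{N+1}) for smooth vector fields X_α, for each N. Then the vector fields X_α are uniquely determined: if two collections {X_α}, {Y_α} both satisfy these identities for all N, then X_α = Y_α for every α near x₀. -/
open Finset

/-- Degree of a multi-index. -/
def mdeg {k : ℕ} (α : Fin k → ℕ) : ℕ := ∑ i, α i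

/-- `t^α`. -/
def tpow {k : ℕ} (t : Fin k → ℝ) (α : Fin k → ℕ) : ℝ := ∏ i, t i ^ α i

/-- `α!`. -/
def mfact {k : ℕ} (α : Fin k → ℕ) : ℕ := ∏ i, Nat.factorial (α i)

/-- The multi-indices `α` with `0 < |α| ≤ N`. -/
def mIdxs (k N : ℕ) : Finset (Fin k → ℕ) :=
  (Fintype.piFinset fun _ : Fin k => Finset.range (N + 1)).filter
    fun α => 0 < ∑ i, α i ∧ ∑ i, α i ≤ N

/-- The vector field `∑_{0 < |α| ≤ N} (t^α / α!) X_α`. -/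
noncomputable def vSum {n k : ℕ} (N : ℕ)
    (X : (Fin k → ℕ) → (Fin n → ℝ) → (Fin n → ℝ))
    (t : Fin k → ℝ) (x : Fin n → ℝ) : Fin n → ℝ :=
  ∑ α ∈ mIdxs k N, (tpow t α / (mfact α : ℝ)) • X α x

lemma mem_mIdxs {k N : ℕ} {α : Fin k → ℕ} : α ∈ mIdxs k N ↔ 0 < mdeg α ∧ mdeg α ≤ N := by
  simp only [mIdxs, Finset.mem_filter, Fintype.mem_piFinset, Finset.mem_range, mdeg]
  constructor
  · rintro ⟨-, h⟩; exact h
  · rintro ⟨h1, h2⟩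
    refine ⟨fun i => Nat.lt_succ_of_le (le_trans ?_ h2), h1, h2⟩
    exact Finset.single_le_sum (fun _ _ => Nat.zero_le _) (Finset.mem_univ i)

lemma one_le_mfact {k : ℕ} (α : Fin k → ℕ) : (1:ℝ) ≤ (mfact α : ℝ) := by
  have : 1 ≤ mfact α := Finset.one_le_prod' fun i _ => Nat.one_le_iff_ne_zero.2 (Nat.factorial_ne_zero _)
  exact_mod_cast this

lemma abs_tpow_le {k : ℕ} (t : Fin k → ℝ) (α : Fin k → ℕ) : |tpow t α| ≤ ‖t‖ ^ mdeg α := by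
  rw [tpow, mdeg, Finset.abs_prod, ← Finset.prod_pow_eq_pow_sum]
  refine Finset.prod_le_prod (fun i _ => abs_nonneg _) fun i _ => ?_
  rw [abs_pow]
  exact pow_le_pow_left₀ (abs_nonneg _) (norm_le_pi_norm t i) _

lemma abs_coeff_le {k : ℕ} (t : Fin k → ℝ) (α : Fin k → ℕ) :
    |tpow t α / (mfact α : ℝ)| ≤ ‖t‖ ^ mdeg α := by
  rw [abs_div, abs_of_nonneg (by positivity : (0:ℝ) ≤ (mfact α : ℝ))]
  exact le_trans (div_le_self (abs_nonneg _) (one_le_mfact α) |>.trans le_rfl) (abs_tpow_le t α)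

lemma exists_lip {n : ℕ} (f : (Fin n → ℝ) → (Fin n → ℝ)) (hf : ContDiff ℝ (⊤:ℕ∞) f)
    (x : Fin n → ℝ) (r : ℝ) :
    ∃ M : ℝ, 0 ≤ M ∧ (∀ y ∈ Metric.closedBall x r, ‖f y‖ ≤ M) ∧
      ∀ y ∈ Metric.closedBall x r, ∀ z ∈ Metric.closedBall x r, ‖f y - f z‖ ≤ M * ‖y - z‖ := by
  obtain ⟨C1, hC1⟩ := (isCompact_closedBall x r).exists_bound_of_continuousOn
    hf.continuous.continuousOn
  obtain ⟨C2, hC2⟩ := (isCompact_closedBall x r).exists_bound_of_continuousOn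
    ((hf.continuous_fderiv (by simp)).continuousOn)
  refine ⟨max (max C1 C2) 0, le_max_right _ _, ?_, ?_⟩
  · intro y hy
    exact (hC1 y hy).trans ((le_max_left _ _).trans (le_max_left _ _))
  · intro y hy z hz
    have h := Convex.norm_image_sub_le_of_norm_fderiv_le (C := max (max C1 C2) 0)
      (fun w _ => (hf.differentiable (by simp)).differentiableAt)
      (fun w hw => (hC2 w hw).trans ((le_max_right _ _).trans (le_max_left _ _)))
      (convex_closedBall x r) hz hy
    exact h

lemma aux_mvt {E : Type*} [NormedAddCommGroup E] [NormedSpace ℝ E]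
    {φ g : ℝ → E} {B b : ℝ} (hb : 0 ≤ b)
    (hd : ∀ s ∈ Set.Icc (0:ℝ) b, HasDerivAt φ (g s) s)
    (hg : ∀ s ∈ Set.Icc (0:ℝ) b, ‖g s‖ ≤ B) :
    ‖φ b - φ 0‖ ≤ B * b := by
  have h := Convex.norm_image_sub_le_of_norm_hasDerivWithin_le
    (f := φ) (f' := g) (s := Set.Icc 0 b) (C := B)
    (fun s hs => (hd s hs).hasDerivWithinAt) hg (convex_Icc 0 b)
    (Set.left_mem_Icc.2 hb) (Set.right_mem_Icc.2 hb)
  simpa [abs_of_nonneg hb] using h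

open Filter Topology in
lemma aux_confine {E : Type*} [NormedAddCommGroup E] [NormedSpace ℝ E]
    {φ : ℝ → E} {f : E → E} {x : E} {r K : ℝ}
    (hr : 0 < r) (hK : 0 ≤ K) (hKr : K < r) (h0 : φ 0 = x)
    (hd : ∀ s ∈ Set.Icc (0:ℝ) 1, HasDerivAt φ (f (φ s)) s)
    (hf : ∀ y ∈ Metric.closedBall x r, ‖f y‖ ≤ K) :
    ∀ s ∈ Set.Icc (0:ℝ) 1, ‖φ s - x‖ ≤ K * s := by
  have hcont : ∀ u ∈ Set.Icc (0:ℝ) 1, ContinuousAt (fun w => ‖φ w - x‖) u :=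
    fun u hu => ((hd u hu).continuousAt.sub continuousAt_const).norm
  have hball : ∀ s ∈ Set.Icc (0:ℝ) 1, ‖φ s - x‖ ≤ r := by
    by_contra hcon
    push_neg at hcon
    obtain ⟨s₁, hs₁, hs₁r⟩ := hcon
    set T : Set ℝ := {s | s ∈ Set.Icc (0:ℝ) 1 ∧ r ≤ ‖φ s - x‖} with hT
    have hTne : T.Nonempty := ⟨s₁, hs₁, hs₁r.le⟩
    have hTbdd : BddBelow T := ⟨0, fun u hu => hu.1.1⟩
    set s₀ := sInf T with hs₀def
    have hs₀mem : s₀ ∈ Set.Icc (0:ℝ) 1 :=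
      ⟨le_csInf hTne fun u hu => hu.1.1, (csInf_le hTbdd ⟨hs₁, hs₁r.le⟩).trans hs₁.2⟩
    have key1 : r ≤ ‖φ s₀ - x‖ := by
      have hcl : s₀ ∈ closure T := csInf_mem_closure hTne hTbdd
      haveI hne : (𝓝[T] s₀).NeBot := mem_closure_iff_nhdsWithin_neBot.1 hcl
      refine ge_of_tendsto (((hcont s₀ hs₀mem).continuousWithinAt (s := T)).tendsto) ?_
      exact eventually_nhdsWithin_of_forall fun u hu => hu.2
    have key2 : 0 < s₀ := by
      rcases eq_or_lt_of_le hs₀mem.1 with h | h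
      · exfalso; rw [← h] at key1; simp [h0] at key1; linarith
      · exact h
    have key3 : ∀ u ∈ Set.Ico (0:ℝ) s₀, ‖φ u - x‖ ≤ K * u := by
      intro u hu
      have hu1 : u ∈ Set.Icc (0:ℝ) 1 := ⟨hu.1, hu.2.le.trans hs₀mem.2⟩
      have hin : ∀ w ∈ Set.Icc (0:ℝ) u, φ w ∈ Metric.closedBall x r := by
        intro w hw
        have hw1 : w ∈ Set.Icc (0:ℝ) 1 := ⟨hw.1, hw.2.trans hu1.2⟩
        have hwlt : w < s₀ := lt_of_le_of_lt hw.2 hu.2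
        have hnotT : w ∉ T := fun hmem => absurd (csInf_le hTbdd hmem) (not_le.2 hwlt)
        have hlt : ¬ r ≤ ‖φ w - x‖ := fun hge => hnotT ⟨hw1, hge⟩
        rw [Metric.mem_closedBall, dist_eq_norm]
        exact (not_le.1 hlt).le
      have h := aux_mvt (b := u) hu.1 (fun w hw => hd w ⟨hw.1, hw.2.trans hu1.2⟩)
        (fun w hw => hf _ (hin w hw))
      rwa [h0] at h
    have key4 : ‖φ s₀ - x‖ ≤ K * s₀ := by
      have htend : Tendsto (fun u => ‖φ u - x‖) (𝓝[<] s₀) (𝓝 ‖φ s₀ - x‖) :=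
        ((hcont s₀ hs₀mem).continuousWithinAt (s := Set.Iio s₀)).tendsto
      have hmem : Set.Ico (0:ℝ) s₀ ∈ 𝓝[<] s₀ := Ico_mem_nhdsLT_of_mem ⟨key2, le_rfl⟩
      refine le_of_tendsto htend ?_
      filter_upwards [hmem] with u hu
      calc ‖φ u - x‖ ≤ K * u := key3 u hu
        _ ≤ K * s₀ := by nlinarith [hu.2, hK]
    nlinarith [hs₀mem.2, hK]
  intro s hs
  have h := aux_mvt (b := s) hs.1 (fun w hw => hd w ⟨hw.1, hw.2.trans hs.2⟩)
    (fun w hw => hf _ (by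
      rw [Metric.mem_closedBall, dist_eq_norm]
      exact hball w ⟨hw.1, hw.2.trans hs.2⟩))
  rwa [h0] at h

lemma coeff_zero_of_vanish {k : ℕ} (F : Finset (Fin k → ℕ)) (c : (Fin k → ℕ) → ℝ)
    (h : ∀ u : Fin k → ℝ, ∑ β ∈ F, c β * tpow u β = 0) : ∀ β ∈ F, c β = 0 := by
  classical
  intro β hβ
  set p : MvPolynomial (Fin k) ℝ :=
    ∑ α ∈ F, MvPolynomial.monomial (Finsupp.equivFunOnFinite.symm α) (c α) with hp
  have hp0 : p = 0 := by
    apply MvPolynomial.funext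
    intro u
    rw [hp, map_sum, map_zero]
    have he : ∀ α ∈ F, MvPolynomial.eval u
        (MvPolynomial.monomial (Finsupp.equivFunOnFinite.symm α) (c α)) = c α * tpow u α := by
      intro α _
      rw [MvPolynomial.eval_monomial]
      congr 1
      rw [tpow, Finsupp.prod_pow]
      simp [Finsupp.equivFunOnFinite]
    rw [Finset.sum_congr rfl he, h u]
  have hc := congrArg (MvPolynomial.coeff (Finsupp.equivFunOnFinite.symm β)) hp0
  rw [MvPolynomial.coeff_zero, hp, MvPolynomial.coeff_sum,
    Finset.sum_eq_single_of_mem β hβ (fun α _ hne => by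
      rw [MvPolynomial.coeff_monomial, if_neg]
      exact fun e => hne (Finsupp.equivFunOnFinite.symm.injective e)),
    MvPolynomial.coeff_monomial, if_pos rfl] at hc
  exact hc

set_option maxHeartbeats 2000000 in
/-- Uniqueness of the exponential representation: if two collections of smooth
vector fields `X_α`, `Y_α` both satisfy
`γ(x,t) = exp(∑_{0<|α|≤N} t^α X_α/α!)(x) + O(|t|^{N+1})` for every `N`
(the exponentials being given by time-one flows `φX`, `φY` of the respective
vector fields), then `X_α = Y_α` on `U`. -/
theorem stmt13 (n k : ℕ) (x₀ : Fin n → ℝ) (U : Set (Fin n → ℝ))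
    (hU : IsOpen U) (hx₀ : x₀ ∈ U)
    (γ : (Fin n → ℝ) → (Fin k → ℝ) → (Fin n → ℝ))
    (hγs : ContDiff ℝ (⊤ : ℕ∞) fun q : (Fin n → ℝ) × (Fin k → ℝ) => γ q.1 q.2)
    (hγ0 : ∀ x, γ x 0 = x)
    (X Y : (Fin k → ℕ) → (Fin n → ℝ) → (Fin n → ℝ))
    (hXs : ∀ α, ContDiff ℝ (⊤ : ℕ∞) (X α)) (hYs : ∀ α, ContDiff ℝ (⊤ : ℕ∞) (Y α))
    (φX φY : ℕ → (Fin k → ℝ) → ℝ → (Fin n → ℝ) → (Fin n → ℝ))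
    (hφX0 : ∀ N t x, φX N t 0 x = x)
    (hφY0 : ∀ N t x, φY N t 0 x = x)
    (hφX' : ∀ N t x, ∀ s ∈ Set.Icc (0 : ℝ) 1,
      HasDerivAt (fun s' => φX N t s' x) (vSum N X t (φX N t s x)) s)
    (hφY' : ∀ N t x, ∀ s ∈ Set.Icc (0 : ℝ) 1,
      HasDerivAt (fun s' => φY N t s' x) (vSum N Y t (φY N t s x)) s)
    (hAX : ∀ N : ℕ, ∀ x ∈ U, ∃ C > (0 : ℝ), ∃ ε > (0 : ℝ), ∀ t : Fin k → ℝ,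
      ‖t‖ ≤ ε → ‖γ x t - φX N t 1 x‖ ≤ C * ‖t‖ ^ (N + 1))
    (hAY : ∀ N : ℕ, ∀ x ∈ U, ∃ C > (0 : ℝ), ∃ ε > (0 : ℝ), ∀ t : Fin k → ℝ,
      ‖t‖ ≤ ε → ‖γ x t - φY N t 1 x‖ ≤ C * ‖t‖ ^ (N + 1)) :
    ∀ α : Fin k → ℕ, 0 < mdeg α → ∀ x ∈ U, X α x = Y α x := by
  classical
  suffices H : ∀ m : ℕ, ∀ α : Fin k → ℕ, mdeg α = m → 0 < m → ∀ x ∈ U, X α x = Y α x by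
    intro α hα x hx
    exact H (mdeg α) α rfl hα x hx
  intro m
  induction m using Nat.strong_induction_on with
  | _ m IH =>
  intro α hαm hm0 x hxU
  -- ### The analytic estimate ###
  have claim : ∃ C₃ : ℝ, 0 ≤ C₃ ∧ ∃ ε₀ > (0:ℝ), ∀ t : Fin k → ℝ, ‖t‖ ≤ ε₀ →
      ‖∑ β ∈ (mIdxs k m).filter (fun β => mdeg β = m),
        (tpow t β / (mfact β : ℝ)) • (X β x - Y β x)‖ ≤ C₃ * ‖t‖ ^ (m + 1) := by
    obtain ⟨r, hr, hball⟩ : ∃ r > (0:ℝ), Metric.closedBall x r ⊆ U := by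
      obtain ⟨ρ, hρ, hsub⟩ := Metric.isOpen_iff.1 hU x hxU
      exact ⟨ρ/2, by positivity, (Metric.closedBall_subset_ball (by linarith)).trans hsub⟩
    choose MX hMX0 hMXb hMXl using fun β => exists_lip (X β) (hXs β) x r
    choose MY hMY0 hMYb hMYl using fun β => exists_lip (Y β) (hYs β) x r
    set CM := ∑ β ∈ mIdxs k m, (MX β + MY β) with hCMdef
    clear_value CM
    have hCM0 : 0 ≤ CM := by
      rw [hCMdef]
      exact Finset.sum_nonneg fun β _ => add_nonneg (hMX0 β) (hMY0 β)
    have hterm : ∀ β ∈ mIdxs k m, ∀ t : Fin k → ℝ, ‖t‖ ≤ 1 →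
        |tpow t β / (mfact β : ℝ)| ≤ ‖t‖ := by
      intro β hβ t ht
      refine (abs_coeff_le t β).trans ?_
      have h1 : 1 ≤ mdeg β := (mem_mIdxs.1 hβ).1
      calc ‖t‖ ^ mdeg β ≤ ‖t‖ ^ 1 := pow_le_pow_of_le_one (norm_nonneg t) ht h1
        _ = ‖t‖ := pow_one _
    -- bound on the vector fields
    have hvXb : ∀ t : Fin k → ℝ, ‖t‖ ≤ 1 → ∀ y ∈ Metric.closedBall x r,
        ‖vSum m X t y‖ ≤ CM * ‖t‖ := by
      intro t ht y hy
      refine (norm_sum_le _ _).trans ?_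
      rw [hCMdef, Finset.sum_mul]
      refine Finset.sum_le_sum fun β hβ => ?_
      rw [norm_smul, Real.norm_eq_abs]
      calc |tpow t β / (mfact β:ℝ)| * ‖X β y‖ ≤ ‖t‖ * MX β :=
            mul_le_mul (hterm β hβ t ht) (hMXb β y hy) (norm_nonneg _) (norm_nonneg t)
        _ ≤ (MX β + MY β) * ‖t‖ := by nlinarith [hMY0 β, norm_nonneg t]
    have hvYb : ∀ t : Fin k → ℝ, ‖t‖ ≤ 1 → ∀ y ∈ Metric.closedBall x r,
        ‖vSum m Y t y‖ ≤ CM * ‖t‖ := by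
      intro t ht y hy
      refine (norm_sum_le _ _).trans ?_
      rw [hCMdef, Finset.sum_mul]
      refine Finset.sum_le_sum fun β hβ => ?_
      rw [norm_smul, Real.norm_eq_abs]
      calc |tpow t β / (mfact β:ℝ)| * ‖Y β y‖ ≤ ‖t‖ * MY β :=
            mul_le_mul (hterm β hβ t ht) (hMYb β y hy) (norm_nonneg _) (norm_nonneg t)
        _ ≤ (MX β + MY β) * ‖t‖ := by nlinarith [hMX0 β, norm_nonneg t]
    -- Lipschitz bound on vSum Y
    have hvYl : ∀ t : Fin k → ℝ, ‖t‖ ≤ 1 → ∀ y ∈ Metric.closedBall x r,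
        ∀ z ∈ Metric.closedBall x r,
        ‖vSum m Y t y - vSum m Y t z‖ ≤ CM * ‖t‖ * ‖y - z‖ := by
      intro t ht y hy z hz
      rw [vSum, vSum, ← Finset.sum_sub_distrib]
      refine (norm_sum_le _ _).trans ?_
      rw [hCMdef, Finset.sum_mul, Finset.sum_mul]
      refine Finset.sum_le_sum fun β hβ => ?_
      rw [← smul_sub, norm_smul, Real.norm_eq_abs]
      calc |tpow t β / (mfact β:ℝ)| * ‖Y β y - Y β z‖ ≤ ‖t‖ * (MY β * ‖y - z‖) :=
            mul_le_mul (hterm β hβ t ht) (hMYl β y hy z hz) (norm_nonneg _) (norm_nonneg t)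
        _ ≤ (MX β + MY β) * ‖t‖ * ‖y - z‖ := by
            nlinarith [mul_nonneg (mul_nonneg (hMX0 β) (norm_nonneg t)) (norm_nonneg (y - z))]
    -- representation of the difference on the ball
    have hXYeq : ∀ β ∈ mIdxs k m, mdeg β ≠ m → ∀ y ∈ Metric.closedBall x r, X β y = Y β y := by
      intro β hβ hne y hy
      obtain ⟨h1, h2⟩ := mem_mIdxs.1 hβ
      exact IH (mdeg β) (lt_of_le_of_ne h2 hne) β rfl h1 y (hball hy)
    have hdiffrep : ∀ t : Fin k → ℝ, ∀ y ∈ Metric.closedBall x r,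
        vSum m X t y - vSum m Y t y =
          ∑ β ∈ (mIdxs k m).filter (fun β => mdeg β = m),
            (tpow t β / (mfact β:ℝ)) • (X β y - Y β y) := by
      intro t y hy
      rw [vSum, vSum, ← Finset.sum_sub_distrib]
      have e1 : ∑ β ∈ mIdxs k m,
          ((tpow t β / (mfact β:ℝ)) • X β y - (tpow t β / (mfact β:ℝ)) • Y β y)
          = ∑ β ∈ mIdxs k m, (tpow t β / (mfact β:ℝ)) • (X β y - Y β y) :=
        Finset.sum_congr rfl fun β _ => (smul_sub _ _ _).symm
      rw [e1]
      refine (Finset.sum_filter_of_ne fun β hβ h0 => ?_).symm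
      by_contra hne
      exact h0 (by rw [hXYeq β hβ hne y hy, sub_self, smul_zero])
    -- bound on the difference
    have hdb : ∀ t : Fin k → ℝ, ‖t‖ ≤ 1 → ∀ y ∈ Metric.closedBall x r,
        ‖vSum m X t y - vSum m Y t y‖ ≤ CM * ‖t‖ ^ m := by
      intro t ht y hy
      rw [hdiffrep t y hy]
      refine (norm_sum_le _ _).trans ?_
      have hstep : ∀ β ∈ (mIdxs k m).filter (fun β => mdeg β = m),
          ‖(tpow t β / (mfact β:ℝ)) • (X β y - Y β y)‖ ≤ (MX β + MY β) * ‖t‖ ^ m := by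
        intro β hβ
        obtain ⟨hβS, hβm⟩ := Finset.mem_filter.1 hβ
        rw [norm_smul, Real.norm_eq_abs]
        have h1 : |tpow t β / (mfact β:ℝ)| ≤ ‖t‖ ^ m := hβm ▸ abs_coeff_le t β
        have h2 : ‖X β y - Y β y‖ ≤ MX β + MY β :=
          (norm_sub_le _ _).trans (add_le_add (hMXb β y hy) (hMYb β y hy))
        calc |tpow t β / (mfact β:ℝ)| * ‖X β y - Y β y‖ ≤ ‖t‖ ^ m * (MX β + MY β) :=
              mul_le_mul h1 h2 (norm_nonneg _) (pow_nonneg (norm_nonneg t) m)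
          _ = (MX β + MY β) * ‖t‖ ^ m := by ring
      calc ∑ β ∈ (mIdxs k m).filter (fun β => mdeg β = m),
            ‖(tpow t β / (mfact β:ℝ)) • (X β y - Y β y)‖
          ≤ ∑ β ∈ (mIdxs k m).filter (fun β => mdeg β = m), (MX β + MY β) * ‖t‖ ^ m :=
            Finset.sum_le_sum hstep
        _ ≤ ∑ β ∈ mIdxs k m, (MX β + MY β) * ‖t‖ ^ m := by
            refine Finset.sum_le_sum_of_subset_of_nonneg (Finset.filter_subset _ _)
              fun β _ _ => ?_
            have := pow_nonneg (norm_nonneg t) m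
            nlinarith [hMX0 β, hMY0 β]
        _ = CM * ‖t‖ ^ m := by rw [hCMdef, Finset.sum_mul]
    -- Lipschitz bound on the difference
    have hdl : ∀ t : Fin k → ℝ, ‖t‖ ≤ 1 → ∀ y ∈ Metric.closedBall x r,
        ∀ z ∈ Metric.closedBall x r,
        ‖(vSum m X t y - vSum m Y t y) - (vSum m X t z - vSum m Y t z)‖
          ≤ CM * ‖t‖ ^ m * ‖y - z‖ := by
      intro t ht y hy z hz
      rw [hdiffrep t y hy, hdiffrep t z hz, ← Finset.sum_sub_distrib]
      refine (norm_sum_le _ _).trans ?_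
      have hstep : ∀ β ∈ (mIdxs k m).filter (fun β => mdeg β = m),
          ‖(tpow t β / (mfact β:ℝ)) • (X β y - Y β y)
            - (tpow t β / (mfact β:ℝ)) • (X β z - Y β z)‖
          ≤ (MX β + MY β) * ‖t‖ ^ m * ‖y - z‖ := by
        intro β hβ
        obtain ⟨hβS, hβm⟩ := Finset.mem_filter.1 hβ
        rw [← smul_sub, norm_smul, Real.norm_eq_abs]
        have h1 : |tpow t β / (mfact β:ℝ)| ≤ ‖t‖ ^ m := hβm ▸ abs_coeff_le t β
        have h2 : ‖(X β y - Y β y) - (X β z - Y β z)‖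
            ≤ (MX β + MY β) * ‖y - z‖ := by
          have e : (X β y - Y β y) - (X β z - Y β z) = (X β y - X β z) - (Y β y - Y β z) := by
            abel
          rw [e]
          refine (norm_sub_le _ _).trans ?_
          calc ‖X β y - X β z‖ + ‖Y β y - Y β z‖ ≤ MX β * ‖y - z‖ + MY β * ‖y - z‖ :=
                add_le_add (hMXl β y hy z hz) (hMYl β y hy z hz)
            _ = (MX β + MY β) * ‖y - z‖ := by ring
        calc |tpow t β / (mfact β:ℝ)| * ‖(X β y - Y β y) - (X β z - Y β z)‖
            ≤ ‖t‖ ^ m * ((MX β + MY β) * ‖y - z‖) :=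
              mul_le_mul h1 h2 (norm_nonneg _) (pow_nonneg (norm_nonneg t) m)
          _ = (MX β + MY β) * ‖t‖ ^ m * ‖y - z‖ := by ring
      calc ∑ β ∈ (mIdxs k m).filter (fun β => mdeg β = m),
            ‖(tpow t β / (mfact β:ℝ)) • (X β y - Y β y)
              - (tpow t β / (mfact β:ℝ)) • (X β z - Y β z)‖
          ≤ ∑ β ∈ (mIdxs k m).filter (fun β => mdeg β = m),
              (MX β + MY β) * ‖t‖ ^ m * ‖y - z‖ := Finset.sum_le_sum hstep
        _ ≤ ∑ β ∈ mIdxs k m, (MX β + MY β) * ‖t‖ ^ m * ‖y - z‖ := by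
            refine Finset.sum_le_sum_of_subset_of_nonneg (Finset.filter_subset _ _)
              fun β _ _ => ?_
            have h3 := pow_nonneg (norm_nonneg t) m
            nlinarith [mul_nonneg (mul_nonneg (add_nonneg (hMX0 β) (hMY0 β)) h3)
              (norm_nonneg (y - z))]
        _ = CM * ‖t‖ ^ m * ‖y - z‖ := by rw [hCMdef, Finset.sum_mul, Finset.sum_mul]
    -- the asymptotic hypotheses at x
    obtain ⟨CX, hCX, εX, hεX, hax⟩ := hAX m x hxU
    obtain ⟨CY, hCY, εY, hεY, hay⟩ := hAY m x hxU
    set C₁ : ℝ := 2*CM + 2*CM^m with hC₁def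
    set C₂ : ℝ := CM*CM + CM*C₁ with hC₂def
    clear_value C₁ C₂
    have hC₁0 : 0 ≤ C₁ := by
      have := pow_nonneg hCM0 m; rw [hC₁def]; linarith
    have hC₂0 : 0 ≤ C₂ := by
      rw [hC₂def]; nlinarith [mul_nonneg hCM0 hC₁0, mul_nonneg hCM0 hCM0]
    have hCM1 : (0:ℝ) < CM + 1 := by linarith
    refine ⟨CX + CY + C₂, by positivity,
      min (min εX εY) (min 1 (min (r/(CM+1)) (1/(2*(CM+1))))),
      lt_min (lt_min hεX hεY) (lt_min one_pos (lt_min (div_pos hr hCM1)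
        (div_pos one_pos (by linarith)))), ?_⟩
    intro t ht
    have ht1 : ‖t‖ ≤ 1 := ht.trans ((min_le_right _ _).trans (min_le_left _ _))
    have htX : ‖t‖ ≤ εX := ht.trans ((min_le_left _ _).trans (min_le_left _ _))
    have htY : ‖t‖ ≤ εY := ht.trans ((min_le_left _ _).trans (min_le_right _ _))
    have htr' : ‖t‖ ≤ r/(CM+1) :=
      ht.trans ((min_le_right _ _).trans ((min_le_right _ _).trans (min_le_left _ _)))
    have htL' : ‖t‖ ≤ 1/(2*(CM+1)) :=
      ht.trans ((min_le_right _ _).trans ((min_le_right _ _).trans (min_le_right _ _)))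
    have htr : CM * ‖t‖ < r := by
      have h1 : ‖t‖ * (CM+1) ≤ r := (le_div_iff₀ hCM1).1 htr'
      nlinarith [norm_nonneg t, mul_nonneg hCM0 (norm_nonneg t)]
    have htL : CM * ‖t‖ ≤ 1/2 := by
      have h1 : ‖t‖ * (2*(CM+1)) ≤ 1 := (le_div_iff₀ (by linarith)).1 htL'
      nlinarith [norm_nonneg t, hCM0]
    set K : ℝ := CM * ‖t‖ with hKdef
    clear_value K
    have hKnn : 0 ≤ K := by rw [hKdef]; exact mul_nonneg hCM0 (norm_nonneg t)
    -- confinement of the two flows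
    have hconX : ∀ s ∈ Set.Icc (0:ℝ) 1, ‖φX m t s x - x‖ ≤ K * s := by
      rw [hKdef]
      exact aux_confine (f := vSum m X t) hr (mul_nonneg hCM0 (norm_nonneg t))
        (hKdef ▸ htr) (hφX0 m t x) (hφX' m t x) (fun y hy => hvXb t ht1 y hy)
    have hconY : ∀ s ∈ Set.Icc (0:ℝ) 1, ‖φY m t s x - x‖ ≤ K * s := by
      rw [hKdef]
      exact aux_confine (f := vSum m Y t) hr (mul_nonneg hCM0 (norm_nonneg t))
        (hKdef ▸ htr) (hφY0 m t x) (hφY' m t x) (fun y hy => hvYb t ht1 y hy)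
    have hmemX : ∀ s ∈ Set.Icc (0:ℝ) 1, φX m t s x ∈ Metric.closedBall x r := by
      intro s hs
      rw [Metric.mem_closedBall, dist_eq_norm]
      have h1 := hconX s hs
      have h2 : K * s ≤ K := mul_le_of_le_one_right hKnn hs.2
      linarith [htr]
    have hmemY : ∀ s ∈ Set.Icc (0:ℝ) 1, φY m t s x ∈ Metric.closedBall x r := by
      intro s hs
      rw [Metric.mem_closedBall, dist_eq_norm]
      have h1 := hconY s hs
      have h2 : K * s ≤ K := mul_le_of_le_one_right hKnn hs.2
      linarith [htr]
    -- the difference of the flows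
    set D : ℝ → (Fin n → ℝ) := fun s => φX m t s x - φY m t s x with hDdef
    clear_value D
    have hDs : ∀ s : ℝ, φX m t s x - φY m t s x = D s := by
      intro s; rw [hDdef]
    have hD0 : D 0 = 0 := by rw [← hDs]; simp [hφX0, hφY0]
    have hDd : ∀ s ∈ Set.Icc (0:ℝ) 1,
        HasDerivAt D (vSum m X t (φX m t s x) - vSum m Y t (φY m t s x)) s := by
      intro s hs
      rw [hDdef]
      exact (hφX' m t x s hs).sub (hφY' m t x s hs)
    have hA0 : 0 ≤ CM * ‖t‖ ^ m := mul_nonneg hCM0 (pow_nonneg (norm_nonneg t) m)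
    -- bootstrap
    have hboot : ∀ j : ℕ, ∀ s ∈ Set.Icc (0:ℝ) 1,
        ‖D s‖ ≤ 2*(CM*‖t‖^m) + K^j * (2*K) := by
      intro j
      induction j with
      | zero =>
        intro s hs
        have h1 := hconX s hs
        have h2 := hconY s hs
        have h3 : ‖D s‖ ≤ K*s + K*s := by
          calc ‖D s‖ = ‖(φX m t s x - x) - (φY m t s x - x)‖ := by rw [← hDs]; congr 1; abel
            _ ≤ ‖φX m t s x - x‖ + ‖φY m t s x - x‖ := norm_sub_le _ _
            _ ≤ K*s + K*s := add_le_add h1 h2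
        have h4 : K * s ≤ K := mul_le_of_le_one_right hKnn hs.2
        simp only [pow_zero, one_mul]
        linarith
      | succ j hj =>
        intro s hs
        have hder : ∀ w ∈ Set.Icc (0:ℝ) s,
            ‖vSum m X t (φX m t w x) - vSum m Y t (φY m t w x)‖
              ≤ (CM*‖t‖^m) + K * (2*(CM*‖t‖^m) + K^j*(2*K)) := by
          intro w hw
          have hw1 : w ∈ Set.Icc (0:ℝ) 1 := ⟨hw.1, hw.2.trans hs.2⟩
          have e1 : vSum m X t (φX m t w x) - vSum m Y t (φY m t w x)
              = (vSum m X t (φX m t w x) - vSum m Y t (φX m t w x))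
                + (vSum m Y t (φX m t w x) - vSum m Y t (φY m t w x)) := by abel
          rw [e1]
          refine (norm_add_le _ _).trans (add_le_add ?_ ?_)
          · exact hdb t ht1 _ (hmemX w hw1)
          · have h2' := hvYl t ht1 _ (hmemX w hw1) _ (hmemY w hw1)
            rw [hDs w] at h2'
            refine h2'.trans ?_
            rw [← hKdef]
            exact mul_le_mul_of_nonneg_left (hj w hw1) hKnn
        have h6 := aux_mvt (b := s) hs.1 (fun w hw => hDd w ⟨hw.1, hw.2.trans hs.2⟩) hder
        rw [hD0, sub_zero] at h6
        have hKj : 0 ≤ K^j := pow_nonneg hKnn j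
        have h1m2K : (0:ℝ) ≤ 1 - 2*K := by rw [hKdef]; linarith [htL]
        have h7 : ((CM*‖t‖^m) + K * (2*(CM*‖t‖^m) + K^j*(2*K))) * s
            ≤ ((CM*‖t‖^m) + K * (2*(CM*‖t‖^m) + K^j*(2*K))) * 1 := by
          refine mul_le_mul_of_nonneg_left hs.2 ?_
          have q1 : 0 ≤ K^j * (2*K) := mul_nonneg hKj (by linarith)
          have q2 : 0 ≤ 2*(CM*‖t‖^m) + K^j*(2*K) := by linarith
          have q3 : 0 ≤ K * (2*(CM*‖t‖^m) + K^j*(2*K)) := mul_nonneg hKnn q2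
          linarith
        have h8 : ((CM*‖t‖^m) + K * (2*(CM*‖t‖^m) + K^j*(2*K))) * 1
            ≤ 2*(CM*‖t‖^m) + K^(j+1)*(2*K) := by
          rw [pow_succ]
          nlinarith [mul_nonneg hA0 h1m2K]
        linarith [h6.trans (h7.trans h8)]
    have hDm : ∀ s ∈ Set.Icc (0:ℝ) 1, ‖D s‖ ≤ C₁ * ‖t‖^m := by
      intro s hs
      have h1 := hboot (m-1) s hs
      have hKm : K^(m-1)*(2*K) = 2*(CM^m * ‖t‖^m) := by
        have h2 : K^(m-1)*K = K^m := by
          rw [← pow_succ, Nat.sub_add_cancel hm0]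
        calc K^(m-1)*(2*K) = 2*(K^(m-1)*K) := by ring
          _ = 2*K^m := by rw [h2]
          _ = 2*(CM^m*‖t‖^m) := by rw [hKdef, mul_pow]
      rw [hKm] at h1
      calc ‖D s‖ ≤ 2*(CM*‖t‖^m) + 2*(CM^m*‖t‖^m) := h1
        _ = C₁ * ‖t‖^m := by rw [hC₁def]; ring
    -- refined estimate via G
    set c : Fin n → ℝ := vSum m X t x - vSum m Y t x with hcdef
    clear_value c
    have hxB : x ∈ Metric.closedBall x r := Metric.mem_closedBall_self hr.le
    have hGd : ∀ s ∈ Set.Icc (0:ℝ) 1, HasDerivAt (fun w => D w - w • c)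
        ((vSum m X t (φX m t s x) - vSum m Y t (φY m t s x)) - c) s := by
      intro s hs
      have h1 : HasDerivAt (fun w : ℝ => w • c) ((1:ℝ) • c) s :=
        (hasDerivAt_id s).smul_const c
      have h2 := (hDd s hs).sub h1
      rw [one_smul] at h2
      exact h2
    have hGb : ∀ s ∈ Set.Icc (0:ℝ) 1,
        ‖(vSum m X t (φX m t s x) - vSum m Y t (φY m t s x)) - c‖ ≤ C₂ * ‖t‖^(m+1) := by
      intro s hs
      have e1 : (vSum m X t (φX m t s x) - vSum m Y t (φY m t s x)) - c
          = ((vSum m X t (φX m t s x) - vSum m Y t (φX m t s x))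
              - (vSum m X t x - vSum m Y t x))
            + (vSum m Y t (φX m t s x) - vSum m Y t (φY m t s x)) := by
        rw [hcdef]
        abel
      rw [e1]
      refine (norm_add_le _ _).trans ?_
      have h1 := hdl t ht1 _ (hmemX s hs) x hxB
      have h2 := hvYl t ht1 _ (hmemX s hs) _ (hmemY s hs)
      have h3 := hconX s hs
      have h4 := hDm s hs
      have hb1 : ‖(vSum m X t (φX m t s x) - vSum m Y t (φX m t s x))
          - (vSum m X t x - vSum m Y t x)‖ ≤ CM*‖t‖^m * (CM*‖t‖) := by
        refine h1.trans ?_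
        have h5 : ‖φX m t s x - x‖ ≤ CM*‖t‖ := by
          rw [← hKdef]
          exact (hconX s hs).trans (mul_le_of_le_one_right hKnn hs.2)
        exact mul_le_mul_of_nonneg_left h5 hA0
      have hb2 : ‖vSum m Y t (φX m t s x) - vSum m Y t (φY m t s x)‖
          ≤ CM*‖t‖ * (C₁*‖t‖^m) := by
        rw [hDs s] at h2
        refine h2.trans ?_
        exact mul_le_mul_of_nonneg_left h4 (mul_nonneg hCM0 (norm_nonneg t))
      calc ‖(vSum m X t (φX m t s x) - vSum m Y t (φX m t s x))
            - (vSum m X t x - vSum m Y t x)‖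
            + ‖vSum m Y t (φX m t s x) - vSum m Y t (φY m t s x)‖
          ≤ CM*‖t‖^m * (CM*‖t‖) + CM*‖t‖ * (C₁*‖t‖^m) := add_le_add hb1 hb2
        _ = C₂ * ‖t‖^(m+1) := by rw [hC₂def, pow_succ]; ring
    have hG := aux_mvt (b := 1) zero_le_one hGd hGb
    have hG1 : ‖D 1 - c‖ ≤ C₂ * ‖t‖^(m+1) := by
      simpa only [hD0, one_smul, zero_smul, sub_zero, mul_one] using hG
    have hD1 : ‖D 1‖ ≤ (CX + CY) * ‖t‖^(m+1) := by
      have h1 := hax t htX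
      have h2 := hay t htY
      calc ‖D 1‖ = ‖(γ x t - φY m t 1 x) - (γ x t - φX m t 1 x)‖ := by
            rw [← hDs]; congr 1; abel
        _ ≤ ‖γ x t - φY m t 1 x‖ + ‖γ x t - φX m t 1 x‖ := norm_sub_le _ _
        _ ≤ CY*‖t‖^(m+1) + CX*‖t‖^(m+1) := add_le_add h2 h1
        _ = (CX+CY)*‖t‖^(m+1) := by ring
    have hfinal : ‖c‖ ≤ (CX + CY + C₂) * ‖t‖^(m+1) := by
      have h1 : ‖c‖ ≤ ‖D 1‖ + ‖D 1 - c‖ := by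
        calc ‖c‖ = ‖D 1 - (D 1 - c)‖ := by congr 1; abel
          _ ≤ ‖D 1‖ + ‖D 1 - c‖ := norm_sub_le _ _
      calc ‖c‖ ≤ ‖D 1‖ + ‖D 1 - c‖ := h1
        _ ≤ (CX + CY) * ‖t‖^(m+1) + C₂ * ‖t‖^(m+1) := add_le_add hD1 hG1
        _ = (CX + CY + C₂) * ‖t‖^(m+1) := by ring
    rw [hcdef, hdiffrep t x hxB] at hfinal
    exact hfinal
  -- ### The polynomial step ###
  obtain ⟨C₃, hC₃0, ε₀, hε₀, hest⟩ := claim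
  have hQ : ∀ u : Fin k → ℝ,
      ∑ β ∈ (mIdxs k m).filter (fun β => mdeg β = m),
        (tpow u β / (mfact β : ℝ)) • (X β x - Y β x) = 0 := by
    intro u
    set Qu := ∑ β ∈ (mIdxs k m).filter (fun β => mdeg β = m),
      (tpow u β / (mfact β : ℝ)) • (X β x - Y β x) with hQudef
    clear_value Qu
    show Qu = 0
    have hscale : ∀ s : ℝ,
        (∑ β ∈ (mIdxs k m).filter (fun β => mdeg β = m),
          (tpow (s • u) β / (mfact β : ℝ)) • (X β x - Y β x)) = s ^ m • Qu := by
      intro s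
      rw [hQudef, Finset.smul_sum]
      refine Finset.sum_congr rfl fun β hβ => ?_
      have hdβ : mdeg β = m := (Finset.mem_filter.1 hβ).2
      have htp : tpow (s • u) β = s ^ m * tpow u β := by
        rw [tpow, tpow, ← hdβ, mdeg, ← Finset.prod_pow_eq_pow_sum, ← Finset.prod_mul_distrib]
        refine Finset.prod_congr rfl fun i _ => ?_
        rw [Pi.smul_apply, smul_eq_mul, mul_pow]
      rw [htp, mul_div_assoc, mul_smul]
    have hkey : ∀ s : ℝ, 0 < s → s ≤ min 1 (ε₀ / (‖u‖ + 1)) →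
        ‖Qu‖ ≤ (C₃ * (‖u‖ + 1) ^ (m+1)) * s := by
      intro s hs hsle
      have hu0 : (0:ℝ) ≤ ‖u‖ := norm_nonneg u
      have hsu : ‖s • u‖ ≤ ε₀ := by
        rw [norm_smul, Real.norm_eq_abs, abs_of_pos hs]
        have h1 : s ≤ ε₀ / (‖u‖ + 1) := (le_min_iff.1 hsle).2
        have h2 : s * (‖u‖ + 1) ≤ ε₀ := by
          rw [← le_div_iff₀ (by linarith)]
          exact h1
        nlinarith
      have h := hest (s • u) hsu
      rw [hscale, norm_smul, Real.norm_eq_abs, abs_of_pos (pow_pos hs m)] at h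
      have h2 : ‖s • u‖ ^ (m+1) ≤ (s * (‖u‖+1)) ^ (m+1) := by
        apply pow_le_pow_left₀ (norm_nonneg _)
        rw [norm_smul, Real.norm_eq_abs, abs_of_pos hs]
        nlinarith
      have h3 : s ^ m * ‖Qu‖ ≤ s ^ m * ((C₃ * (‖u‖ + 1) ^ (m+1)) * s) := by
        calc s ^ m * ‖Qu‖ ≤ C₃ * ‖s • u‖ ^ (m+1) := h
          _ ≤ C₃ * (s * (‖u‖+1)) ^ (m+1) := mul_le_mul_of_nonneg_left h2 hC₃0
          _ = s ^ m * ((C₃ * (‖u‖ + 1) ^ (m+1)) * s) := by rw [mul_pow, pow_succ]; ring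
      exact le_of_mul_le_mul_left h3 (pow_pos hs m)
    by_contra hne
    have hpos : 0 < ‖Qu‖ := norm_pos_iff.2 hne
    set cc : ℝ := C₃ * (‖u‖ + 1) ^ (m+1) with hccdef
    clear_value cc
    have hcc0 : 0 ≤ cc := by
      rw [hccdef]
      exact mul_nonneg hC₃0 (by positivity)
    set s : ℝ := min (min 1 (ε₀ / (‖u‖ + 1))) (‖Qu‖ / (2 * (cc + 1))) with hsdef
    have hspos : 0 < s := by
      refine lt_min (lt_min one_pos ?_) ?_
      · exact div_pos hε₀ (by positivity)
      · exact div_pos hpos (by linarith)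
    have h1 := hkey s hspos (min_le_left _ _)
    have hs2 : s ≤ ‖Qu‖ / (2 * (cc + 1)) := min_le_right _ _
    have hs2' : s * (2 * (cc + 1)) ≤ ‖Qu‖ := by
      rw [← le_div_iff₀ (by linarith)]
      exact hs2
    nlinarith [h1, hs2', mul_nonneg hcc0 hspos.le, hspos]
  -- extract coefficients
  have hsc : ∀ i : Fin n, ∀ u : Fin k → ℝ,
      ∑ β ∈ (mIdxs k m).filter (fun β => mdeg β = m),
        ((X β x - Y β x) i / (mfact β : ℝ)) * tpow u β = 0 := by
    intro i u
    have h1 := congrFun (hQ u) i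
    rw [Finset.sum_apply] at h1
    simp only [Pi.smul_apply, smul_eq_mul, Pi.zero_apply] at h1
    rw [← h1]
    refine Finset.sum_congr rfl fun β _ => ?_
    ring
  have hmemF : α ∈ (mIdxs k m).filter (fun β => mdeg β = m) := by
    rw [Finset.mem_filter]
    exact ⟨mem_mIdxs.2 ⟨hαm ▸ hm0, hαm.le⟩, hαm⟩
  funext i
  have hβ0 := coeff_zero_of_vanish _ (fun β => (X β x - Y β x) i / (mfact β : ℝ))
    (hsc i) α hmemF
  have hfa : (0:ℝ) < (mfact α : ℝ) := lt_of_lt_of_le one_pos (one_le_mfact α)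
  have h2 : (X α x - Y α x) i = 0 := by
    rcases div_eq_zero_iff.1 hβ0 with h | h
    · exact h
    · exact absurd h (ne_of_gt hfa)
  have h3 : X α x i - Y α x i = 0 := by simpa using h2
  linarith
end

section
/- For any p ≥ 1, s > 0, and σ ∈ (0,1) there exists c > 0 such that for every r ∈ (0,1] and every real-valued f ∈ C_0^∞(ℝᵖ) with f(x) = 0 for all |x| ≥ r and f(x) ≥ 1 for all |x| ≤ σr, one has ‖f‖_{H^s(ℝᵖ)} ≥ c r^{−s} r^{p/2}. -/
open MeasureTheory FourierTransform Metric Complex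

set_option maxHeartbeats 1000000

section Aux

variable {p : ℕ}

local notation "V" => EuclideanSpace ℝ (Fin p)

/-- A smooth compactly supported function is a Schwartz map. -/
noncomputable def sobolevAuxToSchwartz (f : V → ℂ) (h1 : ContDiff ℝ ((⊤ : ℕ∞) : WithTop ℕ∞) f)
    (h2 : HasCompactSupport f) : SchwartzMap (EuclideanSpace ℝ (Fin p)) ℂ where
  toFun := f
  smooth' := h1
  decay' := by
    intro k n
    have hcont : Continuous fun x : V => ‖x‖ ^ k * ‖iteratedFDeriv ℝ n f x‖ :=
      (continuous_norm.pow k).mul (h1.continuous_iteratedFDeriv (by exact_mod_cast le_top)).norm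
    have hsupp : HasCompactSupport fun x : V => ‖x‖ ^ k * ‖iteratedFDeriv ℝ n f x‖ :=
      HasCompactSupport.mul_left (h2.iteratedFDeriv n).norm
    obtain ⟨C, hC⟩ := hcont.bounded_above_of_compact_support hsupp
    refine ⟨C, fun x => ?_⟩
    have := hC x
    calc ‖x‖ ^ k * ‖iteratedFDeriv ℝ n f x‖ ≤ ‖‖x‖ ^ k * ‖iteratedFDeriv ℝ n f x‖‖ :=
          le_abs_self _
    _ ≤ C := this

lemma sobolevAuxFourierConj (u : V → ℂ) (ξ : V) :
    𝓕 (fun x => (starRingEnd ℂ) (u x)) ξ = (starRingEnd ℂ) (𝓕 u (-ξ)) := by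
  rw [Real.fourier_eq, Real.fourier_eq, ← integral_conj]
  congr 1 with x
  simp only [Circle.smul_def, Real.fourierChar_apply, inner_neg_right, smul_eq_mul, map_mul,
    ← Complex.exp_conj, Complex.conj_I, Complex.conj_ofReal]
  congr 2
  push_cast
  ring

/-- Plancherel's theorem for continuous functions whose Fourier transform is integrable. -/
lemma sobolevAuxPlancherel {g : V → ℂ} (hg : Continuous g) (hgi : Integrable g)
    (hFi : Integrable (𝓕 g)) :
    ∫ ξ : V, ‖𝓕 g ξ‖ ^ 2 = ∫ x : V, ‖g x‖ ^ 2 := by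
  have hflip : (innerₗ (EuclideanSpace ℝ (Fin p))).flip = innerₗ (EuclideanSpace ℝ (Fin p)) :=
    flip_innerₗ (EuclideanSpace ℝ (Fin p))
  have hconj : Integrable (fun ξ : V => (starRingEnd ℂ) (𝓕 g ξ)) := by
    refine hFi.norm.mono' ?_ ?_
    · exact (Complex.continuous_conj.comp
        (VectorFourier.fourierIntegral_continuous Real.continuous_fourierChar
          (by exact continuous_inner) hgi)).aestronglyMeasurable
    · filter_upwards with ξ
      simp
  have key : ∫ ξ : V, 𝓕 g ξ * (starRingEnd ℂ) (𝓕 g ξ) =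
      ∫ x : V, g x * (starRingEnd ℂ) (g x) := by
    have mult := VectorFourier.integral_fourierIntegral_smul_eq_flip
      (L := innerₗ (EuclideanSpace ℝ (Fin p))) (F := ℂ)
      Real.continuous_fourierChar (by exact continuous_inner) hgi hconj
    rw [hflip] at mult
    have hF2 : ∀ x : V, 𝓕 (fun ξ : V => (starRingEnd ℂ) (𝓕 g ξ)) x =
        (starRingEnd ℂ) (g x) := by
      intro x
      rw [sobolevAuxFourierConj]
      have : 𝓕 (𝓕 g) (-x) = 𝓕⁻ (𝓕 g) x :=
        (Real.fourierInv_eq_fourier_neg (𝓕 g) x).symm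
      rw [this, hg.fourierInv_fourier_eq hgi hFi]
    calc ∫ ξ : V, 𝓕 g ξ * (starRingEnd ℂ) (𝓕 g ξ)
        = ∫ ξ : V, 𝓕 g ξ • (starRingEnd ℂ) (𝓕 g ξ) := by simp [smul_eq_mul]
      _ = ∫ x : V, g x • 𝓕 (fun ξ : V => (starRingEnd ℂ) (𝓕 g ξ)) x := mult
      _ = ∫ x : V, g x * (starRingEnd ℂ) (g x) := by
          simp only [smul_eq_mul, hF2]
  have h1 : ∀ z : ℂ, z * (starRingEnd ℂ) z = ((‖z‖ ^ 2 : ℝ) : ℂ) := by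
    intro z
    rw [Complex.mul_conj, Complex.normSq_eq_norm_sq]
  simp only [h1] at key
  have ofre : ∀ u : V → ℝ, ∫ x : V, ((u x : ℝ) : ℂ) = ((∫ x : V, u x : ℝ) : ℂ) := fun u =>
    integral_ofReal
  rw [ofre, ofre] at key
  exact_mod_cast key


lemma sobolevAuxMinPow {a t : ℝ} {k : ℕ} (ha : 0 ≤ a) (hk : 0 < k) (ht : 0 < t)
    (htk : t ≤ k) : (min 1 a) ^ k ≤ a ^ t := by
  rcases eq_or_lt_of_le ha with h0 | h0
  · rw [← h0, Real.zero_rpow ht.ne']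
    simp [min_eq_right, zero_pow hk.ne']
  rcases le_total 1 a with h1 | h1
  · rw [min_eq_left h1, one_pow]
    exact Real.one_le_rpow h1 ht.le
  · rw [min_eq_right h1]
    calc (a : ℝ) ^ k = a ^ (k : ℝ) := (Real.rpow_natCast a k).symm
      _ ≤ a ^ t := Real.rpow_le_rpow_of_exponent_ge h0 h1 htk

lemma sobolevAuxCharBound (θ : ℝ) :
    ‖((𝐞 θ : Circle) : ℂ) - 1‖ ≤ 2 * min 1 (2 * Real.pi * |θ|) := by
  have hb : (0:ℝ) ≤ 2 * Real.pi * |θ| := by positivity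
  rw [Real.fourierChar_apply]
  rcases le_total (2 * Real.pi * |θ|) 1 with h | h
  · rw [min_eq_right h]
    have habs : ‖(((2 * Real.pi * θ : ℝ) : ℂ) * Complex.I)‖ = 2 * Real.pi * |θ| := by
      rw [norm_mul, Complex.norm_I, Complex.norm_real, mul_one, Real.norm_eq_abs, abs_mul]
      have : |(2 : ℝ) * Real.pi| = 2 * Real.pi := abs_of_pos (by positivity)
      rw [this]
    have := Complex.norm_exp_sub_one_le (x := ((2 * Real.pi * θ : ℝ) : ℂ) * Complex.I)
      (by rw [habs]; exact h)
    rw [habs] at this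
    exact this
  · rw [min_eq_left h]
    have h1 : ‖(Complex.exp (((2 * Real.pi * θ : ℝ) : ℂ) * Complex.I))‖ = 1 :=
      Complex.norm_exp_ofReal_mul_I _
    calc ‖Complex.exp (((2 * Real.pi * θ : ℝ) : ℂ) * Complex.I) - 1‖
        ≤ ‖Complex.exp (((2 * Real.pi * θ : ℝ) : ℂ) * Complex.I)‖ + ‖(1:ℂ)‖ := norm_sub_le _ _
      _ = 2 := by rw [h1, norm_one]; norm_num
      _ = 2 * 1 := (mul_one 2).symm

lemma sobolevAuxFourierDiff {p : ℕ} {g : EuclideanSpace ℝ (Fin p) → ℂ} (hg : Continuous g)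
    (hgc : HasCompactSupport g) (h : EuclideanSpace ℝ (Fin p)) :
    𝓕 (fun x => g (x + h) - g x) =
      fun ξ => (((𝐞 (inner ℝ h ξ : ℝ) : Circle) : ℂ) - 1) * 𝓕 g ξ := by
  have hgi : MeasureTheory.Integrable g := hg.integrable_of_hasCompactSupport hgc
  have hgc' : HasCompactSupport (fun x => g (x + h)) :=
    hgc.comp_isClosedEmbedding (Homeomorph.addRight h).isClosedEmbedding
  have hgi' : MeasureTheory.Integrable (fun x => g (x + h)) :=
    (hg.comp (continuous_id.add continuous_const)).integrable_of_hasCompactSupport hgc'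
  have hc' : Continuous (fun x => g (x + h)) := hg.comp (continuous_id.add continuous_const)
  funext ξ
  have key : ∀ u : EuclideanSpace ℝ (Fin p) → ℂ, MeasureTheory.Integrable u → Continuous u →
      MeasureTheory.Integrable
        (fun v : EuclideanSpace ℝ (Fin p) => 𝐞 (-(inner ℝ v ξ : ℝ)) • u v) := by
    intro u hu hc
    refine hu.norm.mono' ?_ ?_
    · have c1 : Continuous fun v : EuclideanSpace ℝ (Fin p) => 𝐞 (-(inner ℝ v ξ : ℝ)) :=
        Real.continuous_fourierChar.comp (Continuous.inner continuous_id continuous_const).neg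
      exact (c1.smul hc).aestronglyMeasurable
    · filter_upwards with v
      rw [Circle.norm_smul]
  have hsub : 𝓕 (fun x => g (x + h) - g x) ξ = 𝓕 (fun x => g (x + h)) ξ - 𝓕 g ξ := by
    simp only [Real.fourier_eq, smul_sub]
    exact MeasureTheory.integral_sub (key _ hgi' hc') (key _ hgi hg)
  rw [hsub]
  have htrans := VectorFourier.fourierIntegral_comp_add_right 𝐞 MeasureTheory.volume
    (innerₗ (EuclideanSpace ℝ (Fin p))) g h
  have h2 : 𝓕 (fun x => g (x + h)) ξ = (𝐞 (inner ℝ h ξ : ℝ) : Circle) • 𝓕 g ξ :=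
    congrFun htrans ξ
  rw [h2]
  simp only [Circle.smul_def, smul_eq_mul]
  ring

end Aux

/-- Sobolev lower bound: for `p ≥ 1`, `s > 0`, `σ ∈ (0,1)` there is `c > 0`
such that every smooth compactly supported `f : ℝᵖ → ℝ` vanishing outside the
ball of radius `r ≤ 1` and `≥ 1` on the ball of radius `σr` satisfies
`‖f‖_{H^s} ≥ c r^{-s} r^{p/2}`, where the `H^s` norm is defined via the Fourier
transform. -/
theorem stmt18 (p : ℕ) (hp : 1 ≤ p) (s σ : ℝ) (hs : 0 < s)
    (hσ0 : 0 < σ) (hσ1 : σ < 1) :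
    ∃ c > (0 : ℝ), ∀ r : ℝ, 0 < r → r ≤ 1 →
      ∀ f : EuclideanSpace ℝ (Fin p) → ℝ,
        ContDiff ℝ (⊤ : ℕ∞) f → HasCompactSupport f →
        (∀ x, r ≤ ‖x‖ → f x = 0) →
        (∀ x, ‖x‖ ≤ σ * r → 1 ≤ f x) →
        c * r ^ (-s) * r ^ ((p : ℝ) / 2) ≤
          Real.sqrt (∫ ξ : EuclideanSpace ℝ (Fin p),
            (1 + ‖ξ‖ ^ 2) ^ s *
              ‖VectorFourier.fourierIntegral Real.fourierChar volume
                (innerₗ (EuclideanSpace ℝ (Fin p))) (fun x => (f x : ℂ)) ξ‖ ^ 2) := by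
  classical
  have hπ : 0 < Real.pi := Real.pi_pos
  set m : ℕ := ⌈s⌉₊ with hmdef
  have hm1 : 0 < m := Nat.ceil_pos.mpr hs
  have hsm : s ≤ (m : ℝ) := Nat.le_ceil s
  haveI hne : Nonempty (Fin p) := ⟨⟨0, hp⟩⟩
  set ω : ℝ := (volume (Metric.ball (0 : EuclideanSpace ℝ (Fin p)) 1)).toReal with hωdef
  have hω0 : 0 < ω := by
    refine ENNReal.toReal_pos ?_ ?_
    · exact (Metric.measure_ball_pos _ _ one_pos).ne'
    · exact measure_ball_lt_top.ne
  set A : ℝ := 4 ^ m * (4 * Real.pi) ^ (2 * s) with hAdef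
  have hA0 : 0 < A := by positivity
  refine ⟨Real.sqrt (σ ^ p * ω / A), Real.sqrt_pos.mpr (by positivity), ?_⟩
  intro r hr hr1 f hf hfc hvan hlow
  set F : EuclideanSpace ℝ (Fin p) → ℂ := fun x => (f x : ℂ) with hFdef
  have hFcont : Continuous F := Complex.continuous_ofReal.comp hf.continuous
  have hFsmooth : ContDiff ℝ ((⊤ : ℕ∞) : WithTop ℕ∞) F :=
    Complex.ofRealCLM.contDiff.comp hf
  have hFsupp : HasCompactSupport F :=
    hfc.comp_left (g := fun x : ℝ => (x : ℂ)) Complex.ofReal_zero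
  set φ : SchwartzMap (EuclideanSpace ℝ (Fin p)) ℂ := sobolevAuxToSchwartz F hFsmooth hFsupp
    with hφdef
  set ψ : SchwartzMap (EuclideanSpace ℝ (Fin p)) ℂ := SchwartzMap.fourierTransformCLM ℂ φ
    with hψdef
  have hψeq : 𝓕 F = ⇑ψ := by
    rw [hψdef, SchwartzMap.fourierTransformCLM_apply]
    rfl
  have hFi : Integrable F := hFcont.integrable_of_hasCompactSupport hFsupp
  have hψi : Integrable (𝓕 F) := by
    rw [hψeq]; exact ψ.integrable
  -- the H^s integrand
  set W : EuclideanSpace ℝ (Fin p) → ℝ :=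
    fun ξ => (1 + ‖ξ‖ ^ 2) ^ s * ‖𝓕 F ξ‖ ^ 2 with hWdef
  have hWnonneg : ∀ ξ, 0 ≤ W ξ := fun ξ => by positivity
  obtain ⟨C₀, hC₀, hC₀le⟩ : ∃ C₀ : ℝ, 0 ≤ C₀ ∧ ∀ ξ, ‖ψ ξ‖ ≤ C₀ := by
    refine ⟨SchwartzMap.seminorm ℝ 0 0 ψ, apply_nonneg _ _, fun ξ => ?_⟩
    exact SchwartzMap.norm_le_seminorm ℝ ψ ξ
  have hWcont : Continuous W := by
    rw [hWdef, hψeq]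
    exact ((continuous_const.add (continuous_norm.pow 2)).rpow_const
      (fun ξ => Or.inr hs.le)).mul (ψ.continuous.norm.pow 2)
  have hWbound : ∀ ξ : EuclideanSpace ℝ (Fin p),
      (1 + ‖ξ‖ ^ 2) ^ s ≤ 4 ^ m * (1 + ‖ξ‖ ^ (2 * m)) := by
    intro ξ
    have h1 : (0:ℝ) ≤ ‖ξ‖ := norm_nonneg _
    calc (1 + ‖ξ‖ ^ 2) ^ s ≤ (1 + ‖ξ‖ ^ 2) ^ (m : ℝ) :=
          Real.rpow_le_rpow_of_exponent_le (by nlinarith) hsm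
      _ = (1 + ‖ξ‖ ^ 2) ^ m := Real.rpow_natCast _ m
      _ ≤ ((1 + ‖ξ‖) ^ 2) ^ m := by
          apply pow_le_pow_left₀ (by positivity)
          nlinarith
      _ = (1 + ‖ξ‖) ^ (2 * m) := by rw [← pow_mul]
      _ ≤ (2 * max 1 ‖ξ‖) ^ (2 * m) := by
          apply pow_le_pow_left₀ (by positivity)
          have := le_max_left (1:ℝ) ‖ξ‖
          have := le_max_right (1:ℝ) ‖ξ‖
          linarith
      _ = 4 ^ m * (max 1 ‖ξ‖) ^ (2 * m) := by
          rw [mul_pow]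
          congr 1
          rw [pow_mul]
          norm_num
      _ ≤ 4 ^ m * (1 + ‖ξ‖ ^ (2 * m)) := by
          apply mul_le_mul_of_nonneg_left _ (by positivity)
          rcases le_total 1 ‖ξ‖ with h | h
          · rw [max_eq_right h]
            have : (0:ℝ) ≤ ‖ξ‖ ^ (2*m) := by positivity
            linarith
          · rw [max_eq_left h, one_pow]
            have : (0:ℝ) ≤ ‖ξ‖ ^ (2*m) := by positivity
            linarith
  have hWi : Integrable W := by
    have hmaj : Integrable (fun ξ : EuclideanSpace ℝ (Fin p) =>
        4 ^ m * C₀ * (‖ψ ξ‖ + ‖ξ‖ ^ (2 * m) * ‖ψ ξ‖)) := by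
      refine Integrable.const_mul ?_ _
      exact ψ.integrable.norm.add (ψ.integrable_pow_mul volume (2 * m))
    refine hmaj.mono' hWcont.aestronglyMeasurable ?_
    filter_upwards with ξ
    rw [Real.norm_of_nonneg (hWnonneg ξ)]
    have hb1 : ‖𝓕 F ξ‖ ^ 2 ≤ C₀ * ‖ψ ξ‖ := by
      rw [hψeq, sq]
      exact mul_le_mul_of_nonneg_right (hC₀le ξ) (norm_nonneg _)
    have hb2 := hWbound ξ
    have h4 : (0:ℝ) < 4 ^ m := by positivity
    have hξ : (0:ℝ) ≤ ‖ξ‖ ^ (2*m) := by positivity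
    have hψξ : (0:ℝ) ≤ ‖ψ ξ‖ := norm_nonneg _
    have hF2 : (0:ℝ) ≤ ‖𝓕 F ξ‖ ^ 2 := by positivity
    calc W ξ ≤ (4 ^ m * (1 + ‖ξ‖ ^ (2 * m))) * (C₀ * ‖ψ ξ‖) := by
          refine mul_le_mul hb2 hb1 hF2 (by positivity)
      _ = 4 ^ m * C₀ * (‖ψ ξ‖ + ‖ξ‖ ^ (2 * m) * ‖ψ ξ‖) := by ring
  -- the translation vector
  set h0 : EuclideanSpace ℝ (Fin p) :=
    (2 * r) • EuclideanSpace.single (⟨0, hp⟩ : Fin p) (1 : ℝ) with hh0def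
  have hh0 : ‖h0‖ = 2 * r := by
    rw [hh0def, norm_smul, EuclideanSpace.norm_single]
    simp [abs_of_pos hr, norm_one]
  -- the difference operator
  set D : (EuclideanSpace ℝ (Fin p) → ℂ) → (EuclideanSpace ℝ (Fin p) → ℂ) :=
    fun g x => g (x + h0) - g x with hDdef
  set z : EuclideanSpace ℝ (Fin p) → ℂ :=
    fun ξ => ((𝐞 (inner ℝ h0 ξ : ℝ) : Circle) : ℂ) - 1 with hzdef
  have hiter : ∀ k : ℕ, Continuous (D^[k] F) ∧ HasCompactSupport (D^[k] F) ∧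
      𝓕 (D^[k] F) =
        fun ξ => z ξ ^ k * 𝓕 F ξ := by
    intro k
    induction k with
    | zero =>
      refine ⟨hFcont, hFsupp, ?_⟩
      funext ξ
      simp
    | succ k ih =>
      obtain ⟨hc, hsup, hft⟩ := ih
      have hstep : D^[k+1] F = D (D^[k] F) := Function.iterate_succ_apply' D k F
      have hc2 : Continuous (D (D^[k] F)) :=
        (hc.comp (continuous_id.add continuous_const)).sub hc
      have hs2 : HasCompactSupport (D (D^[k] F)) := by
        have h1 : HasCompactSupport (fun x => (D^[k] F) (x + h0)) :=
          hsup.comp_isClosedEmbedding (Homeomorph.addRight h0).isClosedEmbedding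
        show HasCompactSupport fun x => (D^[k] F) (x + h0) - (D^[k] F) x
        exact h1.comp₂_left hsup (sub_zero 0)
      refine ⟨hstep ▸ hc2, hstep ▸ hs2, ?_⟩
      rw [hstep]
      have : D (D^[k] F) = fun x => (D^[k] F) (x + h0) - (D^[k] F) x := rfl
      rw [this, sobolevAuxFourierDiff hc hsup h0, hft]
      funext ξ
      dsimp only
      rw [hzdef]
      ring
  have hzero : ∀ k : ℕ, ∀ y : EuclideanSpace ℝ (Fin p),
      (∀ j : ℕ, j ≤ k → r ≤ ‖y + (j : ℝ) • h0‖) → D^[k] F y = 0 := by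
    intro k
    induction k with
    | zero =>
      intro y hy
      have h0y := hy 0 le_rfl
      simp only [Nat.cast_zero, zero_smul, add_zero] at h0y
      rw [Function.iterate_zero_apply]
      simp only [hFdef, hvan y h0y, Complex.ofReal_zero]
    | succ k ih =>
      intro y hy
      rw [Function.iterate_succ_apply']
      show (D^[k] F) (y + h0) - (D^[k] F) y = 0
      have e1 : (D^[k] F) (y + h0) = 0 := by
        refine ih (y + h0) fun j hj => ?_
        have := hy (j + 1) (by omega)
        have e2 : y + ((j : ℕ) + 1 : ℝ) • h0 = y + h0 + (j : ℝ) • h0 := by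
          push_cast
          module
        rw [← e2]
        convert this using 3
        push_cast
        ring
      have e3 : (D^[k] F) y = 0 := ih y fun j hj => hy j (le_trans hj (Nat.le_succ _))
      rw [e1, e3, sub_zero]
  have hval : ∀ k : ℕ, ∀ x : EuclideanSpace ℝ (Fin p), ‖x‖ ≤ σ * r →
      D^[k] F x = (-1 : ℂ) ^ k * F x := by
    intro k
    induction k with
    | zero => intro x hx; simp
    | succ k ih =>
      intro x hx
      rw [Function.iterate_succ_apply']
      show (D^[k] F) (x + h0) - (D^[k] F) x = _
      have hσr : σ * r ≤ r := by nlinarith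
      have e1 : (D^[k] F) (x + h0) = 0 := by
        refine hzero k (x + h0) fun j hj => ?_
        have e2 : x + h0 + (j : ℝ) • h0 = x + ((j : ℝ) + 1) • h0 := by module
        rw [e2]
        have hnormsm : ‖((j : ℝ) + 1) • h0‖ = ((j : ℝ) + 1) * (2 * r) := by
          rw [norm_smul, hh0, Real.norm_of_nonneg (by positivity)]
        have hlower : ‖((j : ℝ) + 1) • h0‖ - ‖x‖ ≤ ‖x + ((j : ℝ) + 1) • h0‖ := by
          have h2 := norm_sub_norm_le (((j : ℝ) + 1) • h0) (-x)
          rw [norm_neg, sub_neg_eq_add] at h2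
          have h3 : ((j : ℝ) + 1) • h0 + x = x + ((j : ℝ) + 1) • h0 := by abel
          rw [h3] at h2
          exact h2
        have hj1 : (1 : ℝ) ≤ (j : ℝ) + 1 := by
          have : (0:ℝ) ≤ (j : ℝ) := Nat.cast_nonneg j
          linarith
        have : 2 * r ≤ ((j : ℝ) + 1) * (2 * r) := by nlinarith
        nlinarith [hx, hσr, hlower, hnormsm]
      rw [e1, ih x hx, zero_sub, pow_succ]
      ring
  set G : EuclideanSpace ℝ (Fin p) → ℂ := D^[m] F with hGdef
  obtain ⟨hGc, hGs, hGft⟩ := hiter m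
  have hGi : Integrable G := hGc.integrable_of_hasCompactSupport hGs
  have hGft2 : 𝓕 G = fun ξ => z ξ ^ m * 𝓕 F ξ := hGft
  have hzle : ∀ ξ, ‖z ξ‖ ≤ 2 * min 1 (2 * Real.pi * |(inner ℝ h0 ξ : ℝ)|) := fun ξ =>
    sobolevAuxCharBound _
  have hzle2 : ∀ ξ, ‖z ξ‖ ≤ 2 := fun ξ => by
    have := hzle ξ
    have : ‖z ξ‖ ≤ 2 * min 1 (2 * Real.pi * |(inner ℝ h0 ξ : ℝ)|) := this
    have hmin : min 1 (2 * Real.pi * |(inner ℝ h0 ξ : ℝ)|) ≤ 1 := min_le_left _ _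
    linarith
  have h𝓕Gi : Integrable (𝓕 G) := by
    have hmeas : Continuous (𝓕 G) :=
      VectorFourier.fourierIntegral_continuous Real.continuous_fourierChar
        (by exact continuous_inner) hGi
    refine ((hψi.norm.const_mul (2 ^ m)).mono' hmeas.aestronglyMeasurable ?_)
    filter_upwards with ξ
    rw [congrFun hGft ξ]
    rw [norm_mul, norm_pow]
    have h1 : ‖z ξ‖ ^ m ≤ 2 ^ m := pow_le_pow_left₀ (norm_nonneg _) (hzle2 ξ) m
    have h2 : (0:ℝ) ≤ ‖𝓕 F ξ‖ := norm_nonneg _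
    exact mul_le_mul_of_nonneg_right h1 h2
  have hplan : ∫ ξ, ‖𝓕 G ξ‖ ^ 2 = ∫ x, ‖G x‖ ^ 2 :=
    sobolevAuxPlancherel hGc hGi h𝓕Gi
  -- lower bound
  have hG2supp : HasCompactSupport fun x => ‖G x‖ ^ 2 :=
    hGs.comp_left (g := fun z : ℂ => ‖z‖ ^ 2) (by simp)
  have hG2i : Integrable fun x => ‖G x‖ ^ 2 :=
    (hGc.norm.pow 2).integrable_of_hasCompactSupport hG2supp
  have hlowint : σ ^ p * r ^ p * ω ≤ ∫ x, ‖G x‖ ^ 2 := by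
    have hballval : (volume (Metric.ball (0 : EuclideanSpace ℝ (Fin p)) (σ * r))).toReal
        = σ ^ p * r ^ p * ω := by
      rw [Measure.addHaar_ball volume 0 (by positivity : (0:ℝ) ≤ σ * r),
        finrank_euclideanSpace_fin, ENNReal.toReal_mul, ENNReal.toReal_ofReal (by positivity)]
      rw [mul_pow]
    calc σ ^ p * r ^ p * ω
        = ∫ _x in Metric.ball (0 : EuclideanSpace ℝ (Fin p)) (σ * r), (1:ℝ) := by
          rw [setIntegral_const, smul_eq_mul, mul_one, ← hballval]; rfl
      _ ≤ ∫ x in Metric.ball (0 : EuclideanSpace ℝ (Fin p)) (σ * r), ‖G x‖ ^ 2 := by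
          refine setIntegral_mono_on (integrableOn_const measure_ball_lt_top.ne)
            hG2i.integrableOn measurableSet_ball fun x hx => ?_
          have hxval : ‖x‖ ≤ σ * r := by
            rw [Metric.mem_ball, dist_zero_right] at hx
            exact hx.le
          have := hval m x hxval
          have hn : ‖G x‖ = ‖F x‖ := by
            rw [hGdef, this, norm_mul, norm_pow, norm_neg, norm_one, one_pow, one_mul]
          have hfx : (1:ℝ) ≤ f x := hlow x hxval
          have hnf : (1:ℝ) ≤ ‖F x‖ := by
            rw [hFdef]
            rw [Complex.norm_real]
            exact le_trans hfx (le_abs_self _)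
          rw [hn] at *
          nlinarith [hnf]
      _ ≤ ∫ x, ‖G x‖ ^ 2 :=
          setIntegral_le_integral hG2i (Filter.Eventually.of_forall fun x => by positivity)
  -- upper bound
  have hub : ∫ ξ, ‖𝓕 G ξ‖ ^ 2 ≤ A * r ^ (2 * s) * ∫ ξ, W ξ := by
    rw [← integral_const_mul]
    refine integral_mono_of_nonneg (Filter.Eventually.of_forall fun ξ => by positivity)
      (hWi.const_mul _) (Filter.Eventually.of_forall fun ξ => ?_)
    show ‖𝓕 G ξ‖ ^ 2 ≤ A * r ^ (2 * s) * W ξ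
    rw [congrFun hGft2 ξ, norm_mul, norm_pow, mul_pow, ← pow_mul]
    have hθ : |(inner ℝ h0 ξ : ℝ)| ≤ 2 * r * ‖ξ‖ := by
      have := abs_real_inner_le_norm h0 ξ
      rw [hh0] at this
      exact this
    have hzkey : ‖z ξ‖ ^ (m * 2) ≤ A * r ^ (2 * s) * (1 + ‖ξ‖ ^ 2) ^ s := by
      have hb : (0:ℝ) ≤ 2 * Real.pi * |(inner ℝ h0 ξ : ℝ)| := by positivity
      calc ‖z ξ‖ ^ (m * 2)
          ≤ (2 * min 1 (2 * Real.pi * |(inner ℝ h0 ξ : ℝ)|)) ^ (m * 2) :=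
            pow_le_pow_left₀ (norm_nonneg _) (hzle ξ) _
        _ = 4 ^ m * (min 1 (2 * Real.pi * |(inner ℝ h0 ξ : ℝ)|)) ^ (2 * m) := by
            rw [mul_pow, mul_comm m 2, pow_mul]
            norm_num
        _ ≤ 4 ^ m * (2 * Real.pi * |(inner ℝ h0 ξ : ℝ)|) ^ (2 * s) := by
            refine mul_le_mul_of_nonneg_left ?_ (by positivity)
            refine sobolevAuxMinPow hb (by omega) (by positivity) ?_
            push_cast
            linarith
        _ ≤ 4 ^ m * (2 * Real.pi * (2 * r * ‖ξ‖)) ^ (2 * s) := by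
            refine mul_le_mul_of_nonneg_left ?_ (by positivity)
            exact Real.rpow_le_rpow hb (by nlinarith) (by positivity)
        _ = 4 ^ m * ((4 * Real.pi) ^ (2*s) * r ^ (2*s) * ‖ξ‖ ^ (2*s)) := by
            congr 1
            rw [show 2 * Real.pi * (2 * r * ‖ξ‖) = (4 * Real.pi) * r * ‖ξ‖ by ring]
            rw [Real.mul_rpow (by positivity) (norm_nonneg _),
              Real.mul_rpow (by positivity) hr.le]
        _ ≤ A * r ^ (2 * s) * (1 + ‖ξ‖ ^ 2) ^ s := by
            rw [hAdef]
            have hnorm : ‖ξ‖ ^ (2 * s) ≤ (1 + ‖ξ‖ ^ 2) ^ s := by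
              have e : ‖ξ‖ ^ (2 * s) = (‖ξ‖ ^ 2) ^ s := by
                rw [← Real.rpow_natCast ‖ξ‖ 2, ← Real.rpow_mul (norm_nonneg _)]
                norm_num [mul_comm]
              rw [e]
              exact Real.rpow_le_rpow (by positivity) (by nlinarith [norm_nonneg ξ]) hs.le
            have h1 : (0:ℝ) ≤ (4:ℝ) ^ m * ((4 * Real.pi) ^ (2*s) * r ^ (2*s)) := by positivity
            calc (4:ℝ) ^ m * ((4 * Real.pi) ^ (2*s) * r ^ (2*s) * ‖ξ‖ ^ (2*s))
                = (4 ^ m * ((4 * Real.pi) ^ (2*s) * r ^ (2*s))) * ‖ξ‖ ^ (2*s) := by ring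
              _ ≤ (4 ^ m * ((4 * Real.pi) ^ (2*s) * r ^ (2*s))) * (1 + ‖ξ‖ ^ 2) ^ s :=
                  mul_le_mul_of_nonneg_left hnorm h1
              _ = 4 ^ m * (4 * Real.pi) ^ (2 * s) * r ^ (2 * s) * (1 + ‖ξ‖ ^ 2) ^ s := by
                  ring
    calc ‖z ξ‖ ^ (m * 2) * ‖𝓕 F ξ‖ ^ 2
        ≤ (A * r ^ (2 * s) * (1 + ‖ξ‖ ^ 2) ^ s) * ‖𝓕 F ξ‖ ^ 2 :=
          mul_le_mul_of_nonneg_right hzkey (by positivity)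
      _ = A * r ^ (2 * s) * W ξ := by rw [hWdef]; ring
  -- combine
  have hY0 : σ ^ p * ω / A * r ^ ((p : ℝ) - 2 * s) ≤ ∫ ξ, W ξ := by
    have hchain : σ ^ p * r ^ p * ω ≤ A * r ^ (2 * s) * ∫ ξ, W ξ := by
      calc σ ^ p * r ^ p * ω ≤ ∫ x, ‖G x‖ ^ 2 := hlowint
        _ = ∫ ξ, ‖𝓕 G ξ‖ ^ 2 := hplan.symm
        _ ≤ A * r ^ (2 * s) * ∫ ξ, W ξ := hub
    rw [Real.rpow_sub hr, Real.rpow_natCast]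
    rw [div_mul_div_comm, div_le_iff₀ (by positivity)]
    nlinarith [Real.rpow_pos_of_pos hr (2*s), hchain]
  have hexp : r ^ (-s) * r ^ ((p : ℝ) / 2) = r ^ (((p : ℝ) - 2 * s) / 2) := by
    rw [← Real.rpow_add hr]
    congr 1
    ring
  calc Real.sqrt (σ ^ p * ω / A) * r ^ (-s) * r ^ ((p : ℝ) / 2)
      = Real.sqrt (σ ^ p * ω / A) * r ^ (((p : ℝ) - 2 * s) / 2) := by
        rw [mul_assoc, hexp]
    _ = Real.sqrt (σ ^ p * ω / A * r ^ ((p : ℝ) - 2 * s)) := by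
        rw [Real.sqrt_mul (by positivity : (0:ℝ) ≤ σ ^ p * ω / A)]
        congr 1
        rw [Real.sqrt_eq_rpow, ← Real.rpow_mul hr.le]
        congr 1
        ring
    _ ≤ Real.sqrt (∫ ξ, W ξ) := Real.sqrt_le_sqrt hY0
end

section
/- Let γ(x,t) = exp(∑_{0<|α|≤m} t^α X_α/α!)(x) + R(x,t) with R(x,t) = O(|t|^{m+1}), where the X_α are smooth vector fields near x₀ and exp denotes the time-one flow. Then there is a constant C such that d(y, γ(y,t)) ≤ C|t| and d(y, γ^{−1}(y,t)) ≤ C|t| uniformly for y near x₀ and t near 0, where d(x,y) = ∑_{I basic} |u_I|^{1/|I|} for y = exp(∑_{I basic} u_I X_I)(x) is the anisotropic quasi-distance built from a basis {X_I} of iterated commutators with weights |I| ≤ m. -/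
open Finset
open Metric Set

open Metric Set Finset

lemma stay_in_ball {E : Type*} [NormedAddCommGroup E] [NormedSpace ℝ E]
    (f F : ℝ → E) (y : E) (ρ C : ℝ) (hC : 0 ≤ C) (hCρ : C < ρ)
    (hd : ∀ s ∈ Icc (0:ℝ) 1, HasDerivAt f (F s) s)
    (h0 : f 0 = y)
    (hb : ∀ s ∈ Icc (0:ℝ) 1, ‖f s - y‖ ≤ ρ → ‖F s‖ ≤ C) :
    ∀ s ∈ Icc (0:ℝ) 1, ‖f s - y‖ ≤ C * s := by
  set S : Set ℝ := {s ∈ Icc (0:ℝ) 1 | ∀ τ ∈ Icc (0:ℝ) s, ‖f τ - y‖ ≤ C * τ} with hS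
  have h0S : (0:ℝ) ∈ S := by
    refine ⟨⟨le_refl _, zero_le_one⟩, fun τ hτ => ?_⟩
    have : τ = 0 := le_antisymm hτ.2 hτ.1
    simp [this, h0]
  have hSne : S.Nonempty := ⟨0, h0S⟩
  have hbdd : BddAbove S := ⟨1, fun s hs => hs.1.2⟩
  set T := sSup S with hT
  have hT0 : 0 ≤ T := le_csSup hbdd h0S
  have hT1 : T ≤ 1 := csSup_le hSne fun s hs => hs.1.2
  have hfc : ContinuousOn f (Icc 0 1) := fun s hs => ((hd s hs).continuousAt).continuousWithinAt
  -- T satisfies the property on [0, T]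
  have hTS : ∀ τ ∈ Icc (0:ℝ) T, ‖f τ - y‖ ≤ C * τ := by
    intro τ hτ
    rcases eq_or_lt_of_le hτ.2 with h | h
    · -- τ = T : closure argument
      subst h
      have hclosed : IsClosed {s ∈ Icc (0:ℝ) 1 | ‖f s - y‖ - C * s ≤ 0} := by
        have hg : ContinuousOn (fun s => ‖f s - y‖ - C * s) (Icc (0:ℝ) 1) :=
          ((hfc.sub continuousOn_const).norm).sub (continuousOn_const.mul continuousOn_id)
        have h2 : {s ∈ Icc (0:ℝ) 1 | ‖f s - y‖ - C * s ≤ 0}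
            = Icc (0:ℝ) 1 ∩ (fun s => ‖f s - y‖ - C * s) ⁻¹' (Iic 0) := by
          ext s; simp [Set.mem_inter_iff, Set.mem_preimage]
        rw [h2]
        exact hg.preimage_isClosed_of_isClosed isClosed_Icc isClosed_Iic
      have hsub : S ⊆ {s ∈ Icc (0:ℝ) 1 | ‖f s - y‖ - C * s ≤ 0} := by
        intro s hs
        exact ⟨hs.1, by linarith [hs.2 s ⟨hs.1.1, le_refl _⟩]⟩
      have hmem : T ∈ {s ∈ Icc (0:ℝ) 1 | ‖f s - y‖ - C * s ≤ 0} :=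
        hclosed.closure_subset ((closure_mono hsub) (csSup_mem_closure hSne hbdd))
      linarith [hmem.2]
    · obtain ⟨s, hsS, hs⟩ := exists_lt_of_lt_csSup hSne h
      exact hsS.2 τ ⟨hτ.1, le_of_lt hs⟩
  -- T = 1
  have hTeq : T = 1 := by
    by_contra hne
    have hTlt : T < 1 := lt_of_le_of_ne hT1 hne
    have hfT : ‖f T - y‖ ≤ C * T := hTS T ⟨hT0, le_refl _⟩
    have hCT : C * T ≤ C := by nlinarith
    -- continuity at T
    have hcT : ContinuousAt f T := (hd T ⟨hT0, hT1⟩).continuousAt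
    obtain ⟨δ, hδpos, hδ⟩ := Metric.continuousAt_iff.mp hcT (ρ - C) (by linarith)
    set T' := min (T + δ/2) 1 with hT'
    have hTT' : T < T' := lt_min (by linarith) hTlt
    have hT'1 : T' ≤ 1 := min_le_right _ _
    have hnear : ∀ s ∈ Icc T T', ‖f s - y‖ ≤ ρ := by
      intro s hs
      have h1 : dist s T < δ := by
        rw [Real.dist_eq, abs_of_nonneg (by linarith [hs.1])]
        have := hs.2
        have : s ≤ T + δ/2 := le_trans this (min_le_left _ _)
        linarith
      have h2 : dist (f s) (f T) < ρ - C := hδ h1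
      rw [dist_eq_norm] at h2
      calc ‖f s - y‖ ≤ ‖f s - f T‖ + ‖f T - y‖ := by
            simpa using norm_add_le (f s - f T) (f T - y)
        _ ≤ (ρ - C) + C * T := by linarith
        _ ≤ ρ := by linarith
    have hmvt := norm_image_sub_le_of_norm_deriv_le_segment' (a := T) (b := T') (C := C)
      (f := f) (f' := F)
      (fun s hs => (hd s ⟨le_trans hT0 hs.1, le_trans hs.2 hT'1⟩).hasDerivWithinAt)
      (fun s hs => hb s ⟨le_trans hT0 hs.1, le_trans (le_of_lt hs.2) hT'1⟩
        (hnear s ⟨hs.1, le_of_lt hs.2⟩))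
    have hT'S : T' ∈ S := by
      refine ⟨⟨by linarith, hT'1⟩, fun τ hτ => ?_⟩
      rcases le_or_gt τ T with h | h
      · exact hTS τ ⟨hτ.1, h⟩
      · have := hmvt τ ⟨le_of_lt h, hτ.2⟩
        calc ‖f τ - y‖ ≤ ‖f τ - f T‖ + ‖f T - y‖ := by
              simpa using norm_add_le (f τ - f T) (f T - y)
          _ ≤ C * (τ - T) + C * T := by linarith
          _ = C * τ := by ring
    have := le_csSup hbdd hT'S
    rw [← hT] at this
    linarith
  intro s hs
  exact hTS s ⟨hs.1, by rw [hTeq]; exact hs.2⟩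
section
variable {n : ℕ} {ι : Type*} [Fintype ι]

lemma aux_lipschitz {E F : Type*} [NormedAddCommGroup E] [NormedSpace ℝ E]
    [FiniteDimensional ℝ E] [NormedAddCommGroup F] [NormedSpace ℝ F]
    (f : E → F) (hf : ContDiff ℝ (⊤:ℕ∞) f) (c : E) (R : ℝ) :
    ∃ K : NNReal, LipschitzOnWith K f (closedBall c R) := by
  have hd : Differentiable ℝ f := hf.differentiable (by simp)
  have hcont : Continuous (fderiv ℝ f) := hf.continuous_fderiv (by simp)
  obtain ⟨C, hC⟩ := (isCompact_closedBall c R).exists_bound_of_continuousOn hcont.continuousOn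
  refine ⟨⟨max C 0, le_max_right _ _⟩, Convex.lipschitzOnWith_of_nnnorm_hasFDerivWithin_le
    (f' := fun x => fderiv ℝ f x) (fun x _ => (hd x).hasFDerivAt.hasFDerivWithinAt)
    (fun x hx => ?_) (convex_closedBall c R)⟩
  change ‖fderiv ℝ f x‖ ≤ max C 0
  exact le_trans (hC x hx) (le_max_left _ _)

lemma flow_unique {E : Type*} [NormedAddCommGroup E] [NormedSpace ℝ E] [FiniteDimensional ℝ E]
    (v : E → E) (hv : ContDiff ℝ (⊤:ℕ∞) v) (f g : ℝ → E)
    (hf : ∀ s ∈ Icc (0:ℝ) 1, HasDerivAt f (v (f s)) s)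
    (hg : ∀ s ∈ Icc (0:ℝ) 1, HasDerivAt g (v (g s)) s)
    (h0 : f 0 = g 0) : ∀ s ∈ Icc (0:ℝ) 1, f s = g s := by
  have hfc : ContinuousOn f (Icc 0 1) := fun s hs => ((hf s hs).continuousAt).continuousWithinAt
  have hgc : ContinuousOn g (Icc 0 1) := fun s hs => ((hg s hs).continuousAt).continuousWithinAt
  have hcomp : IsCompact (f '' Icc 0 1 ∪ g '' Icc 0 1) :=
    (isCompact_Icc.image_of_continuousOn hfc).union (isCompact_Icc.image_of_continuousOn hgc)
  obtain ⟨R, hR⟩ := hcomp.isBounded.subset_closedBall 0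
  obtain ⟨K, hK⟩ := aux_lipschitz v hv 0 R
  have := ODE_solution_unique_of_mem_Icc_right (v := fun _ => v)
    (s := fun _ => closedBall 0 R) (K := K) (a := 0) (b := 1) (fun _ _ => hK) hfc
    (fun s hs => (hf s (Ico_subset_Icc_self hs)).hasDerivWithinAt)
    (fun s hs => hR (Or.inl ⟨s, Ico_subset_Icc_self hs, rfl⟩)) hgc
    (fun s hs => (hg s (Ico_subset_Icc_self hs)).hasDerivWithinAt)
    (fun s hs => hR (Or.inr ⟨s, Ico_subset_Icc_self hs, rfl⟩)) h0
  exact fun s hs => this hs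

set_option maxHeartbeats 1000000 in
lemma key_est (Z : ι → (Fin n → ℝ) → (Fin n → ℝ)) (hZs : ∀ I, ContDiff ℝ (⊤:ℕ∞) (Z I))
    (ψ : (ι → ℝ) → ℝ → (Fin n → ℝ) → (Fin n → ℝ))
    (hψ0 : ∀ u x, ψ u 0 x = x)
    (hψ' : ∀ u x, ∀ s ∈ Icc (0:ℝ) 1,
      HasDerivAt (fun s' => ψ u s' x) (∑ I : ι, u I • Z I (ψ u s x)) s)
    (x₀ : Fin n → ℝ) (Kc : ℝ) (hKc : 1 ≤ Kc)
    (hκ : ∀ c : ι → ℝ, ‖c‖ ≤ Kc * ‖∑ I, c I • Z I x₀‖)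
    (ρ₀ : ℝ) (hρ₀ : 0 < ρ₀) :
    ∃ ρ > (0:ℝ), ρ ≤ ρ₀ ∧ ∃ η > (0:ℝ), ∀ w v : ι → ℝ, ‖w‖ ≤ η → ‖v‖ ≤ η →
      ∀ y ∈ closedBall x₀ ρ, ‖w - v‖ ≤ (2*Kc) * ‖ψ w 1 y - ψ v 1 y‖ := by
  have hKc0 : 0 < Kc := lt_of_lt_of_le one_pos hKc
  -- bound on the frame
  obtain ⟨M, hM⟩ := (isCompact_closedBall x₀ (2*ρ₀)).exists_bound_of_continuousOn
    (f := fun x => ∑ I : ι, ‖Z I x‖)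
    (continuous_finset_sum univ fun I _ => (hZs I).continuous.norm).continuousOn
  set M1 : ℝ := max M 1 with hM1def
  have hM11 : 1 ≤ M1 := le_max_right _ _
  have hM10 : 0 < M1 := lt_of_lt_of_le one_pos hM11
  have hM1 : ∀ x ∈ closedBall x₀ (2*ρ₀), ∑ I : ι, ‖Z I x‖ ≤ M1 :=
    fun x hx => le_trans (le_trans (le_abs_self _) (hM x hx)) (le_max_left _ _)
  -- Lipschitz constants
  have hKZex : ∀ I, ∃ K : NNReal, LipschitzOnWith K (Z I) (closedBall x₀ (2*ρ₀)) :=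
    fun I => aux_lipschitz (Z I) (hZs I) x₀ (2*ρ₀)
  choose KZ hKZ using hKZex
  set L : ℝ := 1 + ∑ I : ι, (KZ I : ℝ) with hLdef
  have hKZsum : (0:ℝ) ≤ ∑ I : ι, (KZ I : ℝ) := Finset.sum_nonneg fun I _ => (KZ I).coe_nonneg
  have hL1 : 1 ≤ L := by simp only [hLdef]; linarith
  have hL0 : 0 < L := lt_of_lt_of_le one_pos hL1
  -- two norm estimates
  have hZsum : ∀ (c : ι → ℝ) (a : Fin n → ℝ), a ∈ closedBall x₀ (2*ρ₀) →
      ‖∑ I : ι, c I • Z I a‖ ≤ ‖c‖ * M1 := by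
    intro c a ha
    calc ‖∑ I : ι, c I • Z I a‖ ≤ ∑ I : ι, ‖c I • Z I a‖ := norm_sum_le _ _
      _ ≤ ∑ I : ι, ‖c‖ * ‖Z I a‖ := Finset.sum_le_sum fun I _ => by
          rw [norm_smul]
          exact mul_le_mul_of_nonneg_right (norm_le_pi_norm c I) (norm_nonneg _)
      _ = ‖c‖ * ∑ I : ι, ‖Z I a‖ := by rw [Finset.mul_sum]
      _ ≤ ‖c‖ * M1 := mul_le_mul_of_nonneg_left (hM1 a ha) (norm_nonneg _)
  have hZdiff : ∀ (c : ι → ℝ) (a b : Fin n → ℝ), a ∈ closedBall x₀ (2*ρ₀) →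
      b ∈ closedBall x₀ (2*ρ₀) → ‖∑ I : ι, c I • (Z I a - Z I b)‖ ≤ ‖c‖ * (L * ‖a - b‖) := by
    intro c a b ha hb
    calc ‖∑ I : ι, c I • (Z I a - Z I b)‖ ≤ ∑ I : ι, ‖c I • (Z I a - Z I b)‖ := norm_sum_le _ _
      _ ≤ ∑ I : ι, ‖c‖ * ((KZ I : ℝ) * ‖a - b‖) := Finset.sum_le_sum fun I _ => by
          rw [norm_smul]
          exact mul_le_mul (norm_le_pi_norm c I) ((hKZ I).norm_sub_le ha hb)
            (norm_nonneg _) (norm_nonneg _)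
      _ = ‖c‖ * ((∑ I : ι, (KZ I : ℝ)) * ‖a - b‖) := by
          rw [Finset.sum_mul, Finset.mul_sum]
      _ ≤ ‖c‖ * (L * ‖a - b‖) := by
          have : (∑ I : ι, (KZ I : ℝ)) * ‖a - b‖ ≤ L * ‖a - b‖ :=
            mul_le_mul_of_nonneg_right (by simp only [hLdef]; linarith) (norm_nonneg _)
          exact mul_le_mul_of_nonneg_left this (norm_nonneg _)
  -- choose ρ and η
  set ρ : ℝ := min ρ₀ (1/(4*Kc*L)) with hρdef
  have hρpos : 0 < ρ := lt_min hρ₀ (by positivity)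
  have hρρ₀ : ρ ≤ ρ₀ := min_le_left _ _
  have hρsmall : Kc * L * ρ ≤ 1/4 := by
    have h1 : ρ ≤ 1/(4*Kc*L) := min_le_right _ _
    have h2 : 0 < Kc * L := by positivity
    rw [div_eq_mul_inv] at h1 ⊢
    calc Kc * L * ρ ≤ Kc * L * (1 * (4*Kc*L)⁻¹) := mul_le_mul_of_nonneg_left h1 (le_of_lt h2)
      _ = 1 * 4⁻¹ := by field_simp
      _ = 1/4 := by norm_num
  set η : ℝ := min (min (1/(2*L)) (ρ₀/(2*M1))) (1/(12*Kc*L*M1)) with hηdef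
  have hηpos : 0 < η := lt_min (lt_min (by positivity) (by positivity)) (by positivity)
  have hηL : η * L ≤ 1/2 := by
    have h1 : η ≤ 1/(2*L) := le_trans (min_le_left _ _) (min_le_left _ _)
    calc η * L ≤ (1/(2*L)) * L := mul_le_mul_of_nonneg_right h1 (le_of_lt hL0)
      _ = 1/2 := by field_simp
  have hηM1 : η * M1 ≤ ρ₀/2 := by
    have h1 : η ≤ ρ₀/(2*M1) := le_trans (min_le_left _ _) (min_le_right _ _)
    calc η * M1 ≤ (ρ₀/(2*M1)) * M1 := mul_le_mul_of_nonneg_right h1 (le_of_lt hM10)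
      _ = ρ₀/2 := by field_simp
  have hηsmall : 3 * (Kc * L * M1) * η ≤ 1/4 := by
    have h1 : η ≤ 1/(12*Kc*L*M1) := min_le_right _ _
    have h2 : 0 < Kc * L * M1 := by positivity
    calc 3 * (Kc * L * M1) * η ≤ 3 * (Kc * L * M1) * (1/(12*Kc*L*M1)) :=
          mul_le_mul_of_nonneg_left h1 (by positivity)
      _ = 1/4 := by field_simp; ring
  refine ⟨ρ, hρpos, hρρ₀, η, hηpos, ?_⟩
  intro w v hw hv y hy
  rw [mem_closedBall, dist_eq_norm] at hy
  have hx₀mem : x₀ ∈ closedBall x₀ (2*ρ₀) := mem_closedBall_self (by positivity)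
  -- confinement
  have hstay : ∀ (c : ι → ℝ), ‖c‖ ≤ η → ∀ s ∈ Icc (0:ℝ) 1,
      ‖ψ c s y - y‖ ≤ η * M1 * s := by
    intro c hc
    refine stay_in_ball (fun s => ψ c s y) (fun s => ∑ I : ι, c I • Z I (ψ c s y)) y ρ₀
      (η * M1) (by positivity) (by linarith) (hψ' c y) (hψ0 c y) ?_
    intro s hs hnear
    have hmem : ψ c s y ∈ closedBall x₀ (2*ρ₀) := by
      rw [mem_closedBall, dist_eq_norm]
      calc ‖ψ c s y - x₀‖ ≤ ‖ψ c s y - y‖ + ‖y - x₀‖ := by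
            simpa using norm_add_le (ψ c s y - y) (y - x₀)
        _ ≤ ρ₀ + ρ₀ := add_le_add hnear (le_trans hy hρρ₀)
        _ = 2 * ρ₀ := by ring
    calc ‖∑ I : ι, c I • Z I (ψ c s y)‖ ≤ ‖c‖ * M1 := hZsum c _ hmem
      _ ≤ η * M1 := mul_le_mul_of_nonneg_right hc (le_of_lt hM10)
  have hmem2 : ∀ (c : ι → ℝ), ‖c‖ ≤ η → ∀ s ∈ Icc (0:ℝ) 1,
      ψ c s y ∈ closedBall x₀ (2*ρ₀) := by
    intro c hc s hs
    rw [mem_closedBall, dist_eq_norm]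
    have h1 := hstay c hc s hs
    have h2 : η * M1 * s ≤ ρ₀ := by
      nlinarith [mul_nonneg (mul_nonneg hηpos.le hM10.le) (sub_nonneg.mpr hs.2)]
    calc ‖ψ c s y - x₀‖ ≤ ‖ψ c s y - y‖ + ‖y - x₀‖ := by
          simpa using norm_add_le (ψ c s y - y) (y - x₀)
      _ ≤ ρ₀ + ρ₀ := add_le_add (le_trans h1 h2) (le_trans hy hρρ₀)
      _ = 2 * ρ₀ := by ring
  have hdistx₀ : ∀ s ∈ Icc (0:ℝ) 1, ‖ψ w s y - x₀‖ ≤ ρ + η * M1 := by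
    intro s hs
    have h1 := hstay w hw s hs
    have h2 : η * M1 * s ≤ η * M1 := by
      nlinarith [mul_nonneg (mul_nonneg hηpos.le hM10.le) (sub_nonneg.mpr hs.2)]
    calc ‖ψ w s y - x₀‖ ≤ ‖ψ w s y - y‖ + ‖y - x₀‖ := by
          simpa using norm_add_le (ψ w s y - y) (y - x₀)
      _ ≤ η * M1 + ρ := add_le_add (le_trans h1 h2) hy
      _ = ρ + η * M1 := by ring
  -- the difference function
  set D : ℝ → (Fin n → ℝ) := fun s => ψ w s y - ψ v s y with hDdef
  set D' : ℝ → (Fin n → ℝ) :=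
    fun s => (∑ I : ι, w I • Z I (ψ w s y)) - ∑ I : ι, v I • Z I (ψ v s y) with hD'def
  have hDd : ∀ s ∈ Icc (0:ℝ) 1, HasDerivAt D (D' s) s :=
    fun s hs => (hψ' w y s hs).sub (hψ' v y s hs)
  have hDc : ContinuousOn D (Icc 0 1) := fun s hs => (hDd s hs).continuousAt.continuousWithinAt
  have hD0 : D 0 = 0 := by simp [hDdef, hψ0]
  -- max of ‖D‖
  obtain ⟨s₀, hs₀, hmax⟩ := isCompact_Icc.exists_isMaxOn (nonempty_Icc.mpr zero_le_one) hDc.norm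
  set S : ℝ := ‖D s₀‖ with hSdef
  have hS0 : 0 ≤ S := norm_nonneg _
  have hmaxS : ∀ s ∈ Icc (0:ℝ) 1, ‖D s‖ ≤ S := isMaxOn_iff.mp hmax
  -- algebraic splittings
  have halg1 : ∀ s : ℝ, D' s = (∑ I : ι, (w - v) I • Z I (ψ w s y))
      + ∑ I : ι, v I • (Z I (ψ w s y) - Z I (ψ v s y)) := by
    intro s
    simp only [hD'def, Pi.sub_apply, sub_smul, smul_sub, Finset.sum_sub_distrib]
    abel
  have hD'bound : ∀ s ∈ Icc (0:ℝ) 1, ‖D' s‖ ≤ ‖w - v‖ * M1 + η * (L * S) := by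
    intro s hs
    rw [halg1 s]
    have h1 : ‖∑ I : ι, (w - v) I • Z I (ψ w s y)‖ ≤ ‖w - v‖ * M1 :=
      hZsum _ _ (hmem2 w hw s hs)
    have h2 : ‖∑ I : ι, v I • (Z I (ψ w s y) - Z I (ψ v s y))‖
        ≤ ‖v‖ * (L * ‖D s‖) := hZdiff v _ _ (hmem2 w hw s hs) (hmem2 v hv s hs)
    have h3 : ‖v‖ * (L * ‖D s‖) ≤ η * (L * S) := by
      have hds := hmaxS s hs
      nlinarith [mul_le_mul hv hds (norm_nonneg (D s)) hηpos.le, hL0.le]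
    calc ‖_ + _‖ ≤ _ + _ := norm_add_le _ _
      _ ≤ ‖w - v‖ * M1 + η * (L * S) := add_le_add h1 (le_trans h2 h3)
  -- bound on S
  have hmvt : ∀ x ∈ Icc (0:ℝ) 1, ‖D x - D 0‖ ≤ (‖w - v‖ * M1 + η * (L * S)) * (x - 0) :=
    norm_image_sub_le_of_norm_deriv_le_segment' (fun s hs => (hDd s hs).hasDerivWithinAt)
      (fun s hs => hD'bound s (Ico_subset_Icc_self hs))
  have hS2 : S ≤ 2 * M1 * ‖w - v‖ := by
    have h1 := hmvt s₀ hs₀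
    rw [hD0, sub_zero, sub_zero] at h1
    have h2 : (0:ℝ) ≤ ‖w - v‖ * M1 + η * (L * S) := by positivity
    have h3 : S ≤ ‖w - v‖ * M1 + η * (L * S) := by
      nlinarith [h1, mul_le_mul_of_nonneg_left hs₀.2 h2]
    nlinarith [h3, hS0, mul_le_mul_of_nonneg_right hηL hS0, norm_nonneg (w - v)]
  -- integral representation
  have hψwc : ContinuousOn (fun s => ψ w s y) (Icc 0 1) :=
    fun s hs => (hψ' w y s hs).continuousAt.continuousWithinAt
  have hψvc : ContinuousOn (fun s => ψ v s y) (Icc 0 1) :=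
    fun s hs => (hψ' v y s hs).continuousAt.continuousWithinAt
  have hD'c : ContinuousOn D' (Icc 0 1) := by
    refine ContinuousOn.sub ?_ ?_ <;>
      exact continuousOn_finset_sum univ fun I _ =>
        continuousOn_const.fun_smul ((hZs I).continuous.comp_continuousOn (by assumption))
  have hint : IntervalIntegrable D' MeasureTheory.volume 0 1 := by
    apply ContinuousOn.intervalIntegrable
    rwa [Set.uIcc_of_le zero_le_one]
  have hDint : (∫ s in (0:ℝ)..1, D' s) = D 1 := by
    rw [intervalIntegral.integral_eq_sub_of_hasDerivAt
      (fun s hs => hDd s (by rwa [Set.uIcc_of_le zero_le_one] at hs)) hint, hD0, sub_zero]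
  set A : Fin n → ℝ := ∑ I : ι, (w - v) I • Z I x₀ with hAdef
  set E : ℝ → (Fin n → ℝ) := fun s => D' s - A with hEdef
  have hEint : IntervalIntegrable E MeasureTheory.volume 0 1 :=
    hint.sub intervalIntegrable_const
  have hsplit : D 1 = (∫ s in (0:ℝ)..1, E s) + A := by
    rw [← hDint]
    have : (∫ s in (0:ℝ)..1, D' s) = ∫ s in (0:ℝ)..1, (E s + A) := by
      congr 1; funext s; simp [hEdef]
    rw [this, intervalIntegral.integral_add hEint intervalIntegrable_const,
      intervalIntegral.integral_const]
    norm_num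
  -- bound on E
  have halg2 : ∀ s : ℝ, E s = (∑ I : ι, (w - v) I • (Z I (ψ w s y) - Z I x₀))
      + ∑ I : ι, v I • (Z I (ψ w s y) - Z I (ψ v s y)) := by
    intro s
    simp only [hEdef, hD'def, hAdef, Pi.sub_apply, sub_smul, smul_sub, Finset.sum_sub_distrib]
    abel
  have hEbound : ∀ s ∈ Set.uIoc (0:ℝ) 1, ‖E s‖ ≤ ‖w - v‖ * (L * (ρ + η * M1)) + η * (L * S) := by
    intro s hs
    rw [Set.uIoc_of_le zero_le_one] at hs
    have hs' : s ∈ Icc (0:ℝ) 1 := Ioc_subset_Icc_self hs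
    rw [halg2 s]
    have h1 : ‖∑ I : ι, (w - v) I • (Z I (ψ w s y) - Z I x₀)‖
        ≤ ‖w - v‖ * (L * ‖ψ w s y - x₀‖) := hZdiff _ _ _ (hmem2 w hw s hs') hx₀mem
    have h1' : ‖w - v‖ * (L * ‖ψ w s y - x₀‖) ≤ ‖w - v‖ * (L * (ρ + η * M1)) := by
      exact mul_le_mul_of_nonneg_left
        (mul_le_mul_of_nonneg_left (hdistx₀ s hs') hL0.le) (norm_nonneg (w - v))
    have h2 : ‖∑ I : ι, v I • (Z I (ψ w s y) - Z I (ψ v s y))‖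
        ≤ ‖v‖ * (L * ‖D s‖) := hZdiff v _ _ (hmem2 w hw s hs') (hmem2 v hv s hs')
    have h3 : ‖v‖ * (L * ‖D s‖) ≤ η * (L * S) := by
      have hds := hmaxS s hs'
      nlinarith [mul_le_mul hv hds (norm_nonneg (D s)) hηpos.le, hL0.le]
    calc ‖_ + _‖ ≤ _ + _ := norm_add_le _ _
      _ ≤ _ := add_le_add (le_trans h1 h1') (le_trans h2 h3)
  have hEnorm : ‖∫ s in (0:ℝ)..1, E s‖ ≤ ‖w - v‖ * (L * (ρ + η * M1)) + η * (L * S) := by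
    have := intervalIntegral.norm_integral_le_of_norm_le_const hEbound
    simpa using this
  -- conclude
  have hAnorm : ‖A‖ ≤ ‖D 1‖ + (‖w - v‖ * (L * (ρ + η * M1)) + η * (L * S)) := by
    have : A = D 1 - (∫ s in (0:ℝ)..1, E s) := by rw [hsplit]; abel
    rw [this]
    calc ‖D 1 - _‖ ≤ ‖D 1‖ + ‖∫ s in (0:ℝ)..1, E s‖ := norm_sub_le _ _
      _ ≤ _ := by linarith
  have hwv := hκ (w - v)
  have hfinal : ‖w - v‖ ≤ Kc * ‖D 1‖ + (1/2) * ‖w - v‖ := by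
    have hq : Kc * (‖w - v‖ * (L * (ρ + η * M1)) + η * (L * S))
        ≤ (1/2) * ‖w - v‖ := by
      have hSb : η * (L * S) ≤ η * L * (2 * M1 * ‖w - v‖) := by
        nlinarith [mul_le_mul_of_nonneg_left hS2 (mul_nonneg hηpos.le hL0.le)]
      have e1 : Kc * (‖w - v‖ * (L * ρ)) ≤ (1/4) * ‖w - v‖ := by
        nlinarith [mul_le_mul_of_nonneg_left hρsmall (norm_nonneg (w - v))]
      have e2 : Kc * (‖w - v‖ * (L * (η * M1)) + η * L * (2 * M1 * ‖w - v‖))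
          ≤ (1/4) * ‖w - v‖ := by
        nlinarith [mul_le_mul_of_nonneg_left hηsmall (norm_nonneg (w - v))]
      nlinarith [norm_nonneg (w - v), hKc0.le]
    calc ‖w - v‖ ≤ Kc * ‖A‖ := hwv
      _ ≤ Kc * (‖D 1‖ + (‖w - v‖ * (L * (ρ + η * M1)) + η * (L * S))) :=
          mul_le_mul_of_nonneg_left hAnorm hKc0.le
      _ = Kc * ‖D 1‖ + Kc * (‖w - v‖ * (L * (ρ + η * M1)) + η * (L * S)) := by ring
      _ ≤ Kc * ‖D 1‖ + (1/2) * ‖w - v‖ := by linarith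
  have : ‖w - v‖ ≤ 2 * Kc * ‖D 1‖ := by linarith
  simpa [hDdef] using this

end

set_option maxHeartbeats 3000000 in
/-- Let `γ(x,t) = exp(∑_{0<|α|≤m} t^α X_α/α!)(x) + O(|t|^{m+1})` (witnessed by
the time-one flow `φ` of `∑ t^α X_α/α!`, and similarly `φ'` with the negated
field for `γ⁻¹`).  Let `{Z_I}_{I ∈ ι}` be a frame of smooth vector fields with
weights `1 ≤ wt I ≤ m` whose values at `x₀` form a basis, containing the
fields `X_α` (via `gmap`, with `wt (gmap α) = |α|`), let `ψ` be the time-one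
flow of `∑_I u_I Z_I`, and let `Θ x y` be the smooth canonical coordinates,
`ψ (Θ x y) 1 x = y`, `Θ x x = 0`.  Then the quasi-distance
`d(x,y) = ∑_I |Θ x y I|^{1/wt I}` satisfies `d(y, γ(y,t)) ≤ C|t|` and
`d(y, γ⁻¹(y,t)) ≤ C|t|`, uniformly for `y` near `x₀` and `t` near `0`. -/
theorem stmt19 (n k m : ℕ) (hm : 1 ≤ m) (x₀ : Fin n → ℝ)
    (U : Set (Fin n → ℝ)) (hU : IsOpen U) (hx₀ : x₀ ∈ U)
    (ι : Type*) [Fintype ι] (wt : ι → ℕ)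
    (hwt : ∀ I, 1 ≤ wt I ∧ wt I ≤ m)
    (Z : ι → (Fin n → ℝ) → (Fin n → ℝ)) (hZs : ∀ I, ContDiff ℝ (⊤ : ℕ∞) (Z I))
    (X : (Fin k → ℕ) → (Fin n → ℝ) → (Fin n → ℝ))
    (hXs : ∀ α, ContDiff ℝ (⊤ : ℕ∞) (X α))
    (gmap : (Fin k → ℕ) → ι)
    (hgmap : ∀ α ∈ mIdxs k m, wt (gmap α) = mdeg α ∧ Z (gmap α) = X α)
    (hbasis : LinearIndependent ℝ (fun I => Z I x₀) ∧
      Submodule.span ℝ (Set.range fun I => Z I x₀) = ⊤)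
    (ψ : (ι → ℝ) → ℝ → (Fin n → ℝ) → (Fin n → ℝ))
    (hψ0 : ∀ u x, ψ u 0 x = x)
    (hψ' : ∀ u x, ∀ s ∈ Set.Icc (0 : ℝ) 1,
      HasDerivAt (fun s' => ψ u s' x) (∑ I : ι, u I • Z I (ψ u s x)) s)
    (Θ : (Fin n → ℝ) → (Fin n → ℝ) → (ι → ℝ))
    (hΘs : ContDiff ℝ (⊤ : ℕ∞) fun q : (Fin n → ℝ) × (Fin n → ℝ) => Θ q.1 q.2)
    (hΘ0 : ∀ x, Θ x x = 0)
    (hΘ : ∀ x ∈ U, ∀ y ∈ U, ψ (Θ x y) 1 x = y)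
    (φ φ' : (Fin k → ℝ) → ℝ → (Fin n → ℝ) → (Fin n → ℝ))
    (hφ0 : ∀ t x, φ t 0 x = x) (hφ'0 : ∀ t x, φ' t 0 x = x)
    (hφode : ∀ t x, ∀ s ∈ Set.Icc (0 : ℝ) 1,
      HasDerivAt (fun s' => φ t s' x) (vSum m X t (φ t s x)) s)
    (hφ'ode : ∀ t x, ∀ s ∈ Set.Icc (0 : ℝ) 1,
      HasDerivAt (fun s' => φ' t s' x) (-(vSum m X t (φ' t s x))) s)
    (γ γinv : (Fin n → ℝ) → (Fin k → ℝ) → (Fin n → ℝ))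
    (hγs : ContDiff ℝ (⊤ : ℕ∞) fun q : (Fin n → ℝ) × (Fin k → ℝ) => γ q.1 q.2)
    (hγinvs : ContDiff ℝ (⊤ : ℕ∞) fun q : (Fin n → ℝ) × (Fin k → ℝ) => γinv q.1 q.2)
    (hγ0 : ∀ x, γ x 0 = x) (hγinv0 : ∀ x, γinv x 0 = x)
    (hinv : ∀ x t, γ (γinv x t) t = x)
    (hrep : ∃ C > (0 : ℝ), ∃ ε > (0 : ℝ), ∀ y ∈ U, ∀ t : Fin k → ℝ, ‖t‖ ≤ ε →
      ‖γ y t - φ t 1 y‖ ≤ C * ‖t‖ ^ (m + 1))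
    (hrep' : ∃ C > (0 : ℝ), ∃ ε > (0 : ℝ), ∀ y ∈ U, ∀ t : Fin k → ℝ, ‖t‖ ≤ ε →
      ‖γinv y t - φ' t 1 y‖ ≤ C * ‖t‖ ^ (m + 1)) :
    ∃ C > (0 : ℝ), ∃ δ > (0 : ℝ), ∃ ε > (0 : ℝ), ∀ y : Fin n → ℝ, ‖y - x₀‖ < δ →
      ∀ t : Fin k → ℝ, ‖t‖ < ε →
        (∑ I : ι, |Θ y (γ y t) I| ^ ((wt I : ℝ)⁻¹)) ≤ C * ‖t‖ ∧
        (∑ I : ι, |Θ y (γinv y t) I| ^ ((wt I : ℝ)⁻¹)) ≤ C * ‖t‖ := by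

  classical
  obtain ⟨C₀, hC₀pos, ε₀, hε₀pos, hrepB⟩ := hrep
  obtain ⟨C₀', hC₀'pos, ε₀', hε₀'pos, hrepB'⟩ := hrep'
  -- the canonical parameters associated with t
  set u : (Fin k → ℝ) → ι → ℝ :=
    fun t I => ∑ α ∈ (mIdxs k m).filter (fun α => gmap α = I), tpow t α / (mfact α : ℝ)
    with hudef
  have hfield : ∀ (t : Fin k → ℝ) (x : Fin n → ℝ),
      (∑ I : ι, u t I • Z I x) = vSum m X t x := by
    intro t x
    rw [vSum, ← Finset.sum_fiberwise (mIdxs k m) gmap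
      (fun α => (tpow t α / (mfact α : ℝ)) • X α x)]
    refine Finset.sum_congr rfl fun I _ => ?_
    simp only [hudef]
    rw [Finset.sum_smul]
    refine Finset.sum_congr rfl fun α hα => ?_
    obtain ⟨hαm, hαI⟩ := Finset.mem_filter.mp hα
    rw [← hαI, (hgmap α hαm).2]
  have hsmooth : ∀ c : ι → ℝ, ContDiff ℝ (⊤:ℕ∞) (fun x => ∑ I : ι, c I • Z I x) :=
    fun c => ContDiff.sum fun I _ => (contDiff_const (c := c I)).smul (hZs I)
  -- flow identities
  have hφψ : ∀ (t : Fin k → ℝ) (y : Fin n → ℝ), φ t 1 y = ψ (u t) 1 y := by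
    intro t y
    refine flow_unique (fun x => ∑ I : ι, u t I • Z I x) (hsmooth (u t))
      (fun s => φ t s y) (fun s => ψ (u t) s y) ?_ ?_ (by simp only [hφ0, hψ0]) 1
      ⟨zero_le_one, le_refl 1⟩
    · intro s hs; simpa only [hfield] using hφode t y s hs
    · exact fun s hs => hψ' (u t) y s hs
  have hφ'ψ : ∀ (t : Fin k → ℝ) (y : Fin n → ℝ), φ' t 1 y = ψ (-(u t)) 1 y := by
    intro t y
    refine flow_unique (fun x => ∑ I : ι, (-(u t)) I • Z I x) (hsmooth (-(u t)))
      (fun s => φ' t s y) (fun s => ψ (-(u t)) s y) ?_ ?_ (by simp only [hφ'0, hψ0]) 1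
      ⟨zero_le_one, le_refl 1⟩
    · intro s hs
      have hneg : (∑ I : ι, (-(u t)) I • Z I (φ' t s y)) = -(vSum m X t (φ' t s y)) := by
        rw [← hfield t (φ' t s y), ← Finset.sum_neg_distrib]
        refine Finset.sum_congr rfl fun I _ => ?_
        simp [neg_smul]
      simpa only [hneg] using hφ'ode t y s hs
    · exact fun s hs => hψ' (-(u t)) y s hs
  -- the basis lower bound
  obtain ⟨Kc, hKc1, hκ⟩ : ∃ Kc : ℝ, 1 ≤ Kc ∧
      ∀ c : ι → ℝ, ‖c‖ ≤ Kc * ‖∑ I : ι, c I • Z I x₀‖ := by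
    let b : Module.Basis ι ℝ (Fin n → ℝ) := Module.Basis.mk hbasis.1 hbasis.2.ge
    let e : (ι → ℝ) ≃L[ℝ] (Fin n → ℝ) := LinearEquiv.toContinuousLinearEquiv b.equivFun.symm
    have he : ∀ c : ι → ℝ, e c = ∑ I : ι, c I • Z I x₀ := by
      intro c
      show b.equivFun.symm c = _
      rw [Module.Basis.equivFun_symm_apply]
      exact Finset.sum_congr rfl fun I _ => by rw [Module.Basis.mk_apply]
    refine ⟨(‖(e.symm : (Fin n → ℝ) →L[ℝ] (ι → ℝ))‖₊ : ℝ) + 1,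
      le_add_of_nonneg_left (NNReal.coe_nonneg _), fun c => ?_⟩
    have h1 := e.antilipschitz.le_mul_norm (map_zero e) c
    rw [he c] at h1
    nlinarith [norm_nonneg (∑ I : ι, c I • Z I x₀)]
  -- neighborhood inside U
  obtain ⟨r₀, hr₀pos, hball⟩ := Metric.isOpen_iff.mp hU x₀ hx₀
  set ρ₀ : ℝ := r₀/3 with hρ₀def
  have hρ₀pos : 0 < ρ₀ := by simp only [hρ₀def]; linarith
  have hsubU : closedBall x₀ (2*ρ₀) ⊆ U :=
    subset_trans (closedBall_subset_ball (by simp only [hρ₀def]; linarith)) hball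
  -- key quantitative injectivity
  obtain ⟨ρ, hρpos, hρρ₀, η, hηpos, hkey⟩ := key_est Z hZs ψ hψ0 hψ' x₀ Kc hKc1 hκ ρ₀ hρ₀pos
  -- quantitative bounds on u t
  set N : ℝ := ((mIdxs k m).card : ℝ) + 1 with hNdef
  have hN1 : (1:ℝ) ≤ N := by
    simp only [hNdef]
    have : (0:ℝ) ≤ ((mIdxs k m).card : ℝ) := Nat.cast_nonneg _
    linarith
  have hN0 : (0:ℝ) < N := lt_of_lt_of_le one_pos hN1
  have hubound : ∀ t : Fin k → ℝ, ‖t‖ ≤ 1 → ∀ I : ι, |u t I| ≤ N * ‖t‖ ^ (wt I) := by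
    intro t ht I
    have hterm : ∀ α ∈ (mIdxs k m).filter (fun α => gmap α = I),
        |tpow t α / (mfact α : ℝ)| ≤ ‖t‖ ^ (wt I) := by
      intro α hα
      obtain ⟨hαm, hαI⟩ := Finset.mem_filter.mp hα
      have hmf : (1:ℝ) ≤ (mfact α : ℝ) := by
        rw [mfact]
        exact_mod_cast Finset.one_le_prod' fun i _ => Nat.one_le_iff_ne_zero.mpr
          (Nat.factorial_pos (α i)).ne'
      have htp : |tpow t α| ≤ ‖t‖ ^ (mdeg α) := by
        rw [tpow, Finset.abs_prod, mdeg, ← Finset.prod_pow_eq_pow_sum]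
        refine Finset.prod_le_prod (fun i _ => by positivity) fun i _ => ?_
        rw [abs_pow]
        exact pow_le_pow_left₀ (abs_nonneg _) (le_trans (le_of_eq (Real.norm_eq_abs (t i)).symm)
          (norm_le_pi_norm t i)) (α i)
      have hdeg : mdeg α = wt I := by rw [← hαI]; exact ((hgmap α hαm).1).symm
      rw [abs_div, abs_of_nonneg (le_trans zero_le_one hmf)]
      calc |tpow t α| / (mfact α : ℝ) ≤ |tpow t α| := div_le_self (abs_nonneg _) hmf
        _ ≤ ‖t‖ ^ (wt I) := hdeg ▸ htp
    calc |u t I| ≤ ∑ α ∈ (mIdxs k m).filter (fun α => gmap α = I),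
          |tpow t α / (mfact α : ℝ)| := Finset.abs_sum_le_sum_abs _ _
      _ ≤ ((mIdxs k m).filter (fun α => gmap α = I)).card • (‖t‖ ^ (wt I)) :=
          Finset.sum_le_card_nsmul _ _ _ hterm
      _ = (((mIdxs k m).filter (fun α => gmap α = I)).card : ℝ) * ‖t‖ ^ (wt I) := by
          rw [nsmul_eq_mul]
      _ ≤ N * ‖t‖ ^ (wt I) := by
          refine mul_le_mul_of_nonneg_right ?_ (by positivity)
          simp only [hNdef]
          have := Finset.card_filter_le (mIdxs k m) (fun α => gmap α = I)
          calc (((mIdxs k m).filter (fun α => gmap α = I)).card : ℝ)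
              ≤ ((mIdxs k m).card : ℝ) := by exact_mod_cast this
            _ ≤ ((mIdxs k m).card : ℝ) + 1 := by linarith
  have hunorm : ∀ t : Fin k → ℝ, ‖t‖ ≤ 1 → ‖u t‖ ≤ N * ‖t‖ := by
    intro t ht
    rw [pi_norm_le_iff_of_nonneg (by positivity)]
    intro I
    rw [Real.norm_eq_abs]
    refine le_trans (hubound t ht I) (mul_le_mul_of_nonneg_left ?_ hN0.le)
    calc ‖t‖ ^ (wt I) ≤ ‖t‖ ^ 1 := pow_le_pow_of_le_one (norm_nonneg t) ht (hwt I).1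
      _ = ‖t‖ := pow_one _
  -- continuity neighborhoods
  have hγc : Continuous (fun q : (Fin n → ℝ) × (Fin k → ℝ) => γ q.1 q.2) := hγs.continuous
  have hγinvc : Continuous (fun q : (Fin n → ℝ) × (Fin k → ℝ) => γinv q.1 q.2) :=
    hγinvs.continuous
  have hΘc : Continuous (fun q : (Fin n → ℝ) × (Fin n → ℝ) => Θ q.1 q.2) := hΘs.continuous
  have hopen : ∀ (g : (Fin n → ℝ) → (Fin k → ℝ) → (Fin n → ℝ)),
      Continuous (fun q : (Fin n → ℝ) × (Fin k → ℝ) => g q.1 q.2) → (∀ x, g x 0 = x) →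
      ∃ r > (0:ℝ), ∀ y : Fin n → ℝ, ∀ t : Fin k → ℝ, dist y x₀ < r → ‖t‖ < r →
        g y t ∈ ball x₀ (2*ρ₀) ∧ ‖Θ y (g y t)‖ < η := by
    intro g hgc hg0
    have hc : Continuous (fun q : (Fin n → ℝ) × (Fin k → ℝ) =>
        ((g q.1 q.2), Θ q.1 (g q.1 q.2))) :=
      (hgc.prodMk (hΘc.comp (continuous_fst.prodMk hgc)))
    have hWopen : IsOpen ((fun q : (Fin n → ℝ) × (Fin k → ℝ) =>
        ((g q.1 q.2), Θ q.1 (g q.1 q.2))) ⁻¹' ((ball x₀ (2*ρ₀)) ×ˢ (ball (0 : ι → ℝ) η))) :=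
      hc.isOpen_preimage _ ((isOpen_ball).prod (isOpen_ball))
    have hWmem : (x₀, (0 : Fin k → ℝ)) ∈ (fun q : (Fin n → ℝ) × (Fin k → ℝ) =>
        ((g q.1 q.2), Θ q.1 (g q.1 q.2))) ⁻¹' ((ball x₀ (2*ρ₀)) ×ˢ (ball (0 : ι → ℝ) η)) := by
      constructor
      · simp only [hg0]
        exact mem_ball_self (by positivity)
      · simp only [hg0, hΘ0]
        exact mem_ball_self hηpos
    obtain ⟨r, hrpos, hr⟩ := Metric.isOpen_iff.mp hWopen _ hWmem
    refine ⟨r, hrpos, fun y t hy ht => ?_⟩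
    have hmem : (y, t) ∈ ball ((x₀, (0 : Fin k → ℝ))) r := by
      rw [mem_ball, Prod.dist_eq]
      exact max_lt hy (by rwa [dist_zero_right])
    obtain ⟨h1, h2⟩ := hr hmem
    exact ⟨h1, by rwa [mem_ball, dist_zero_right] at h2⟩
  obtain ⟨r₁, hr₁pos, hr₁⟩ := hopen γ hγc hγ0
  obtain ⟨r₂, hr₂pos, hr₂⟩ := hopen γinv hγinvc hγinv0
  -- the final constants
  set CF : ℝ := max (N + 2*Kc*C₀) (max (N + 2*Kc*C₀') 1) with hCFdef
  have hCF1 : (1:ℝ) ≤ CF := le_trans (le_max_right _ _) (le_max_right _ _)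
  have hCF0 : (0:ℝ) < CF := lt_of_lt_of_le one_pos hCF1
  have hcard0 : (0:ℝ) ≤ (Fintype.card ι : ℝ) := Nat.cast_nonneg _
  refine ⟨(Fintype.card ι : ℝ) * CF + 1, by nlinarith, min ρ (min r₁ r₂),
    lt_min hρpos (lt_min hr₁pos hr₂pos),
    min 1 (min (min ε₀ ε₀') (min (η/N) (min r₁ r₂))),
    lt_min one_pos (lt_min (lt_min hε₀pos hε₀'pos)
      (lt_min (by positivity) (lt_min hr₁pos hr₂pos))), ?_⟩
  intro y hyδ t htε
  have ht1 : ‖t‖ ≤ 1 := (lt_of_lt_of_le htε (min_le_left _ _)).le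
  have htε₀ : ‖t‖ ≤ ε₀ := (lt_of_lt_of_le htε
    ((min_le_right _ _).trans ((min_le_left _ _).trans (min_le_left _ _)))).le
  have htε₀' : ‖t‖ ≤ ε₀' := (lt_of_lt_of_le htε
    ((min_le_right _ _).trans ((min_le_left _ _).trans (min_le_right _ _)))).le
  have htηN : ‖t‖ ≤ η/N := (lt_of_lt_of_le htε
    ((min_le_right _ _).trans ((min_le_right _ _).trans (min_le_left _ _)))).le
  have htr₁ : ‖t‖ < r₁ := lt_of_lt_of_le htε
    ((min_le_right _ _).trans ((min_le_right _ _).trans ((min_le_right _ _).trans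
      (min_le_left _ _))))
  have htr₂ : ‖t‖ < r₂ := lt_of_lt_of_le htε
    ((min_le_right _ _).trans ((min_le_right _ _).trans ((min_le_right _ _).trans
      (min_le_right _ _))))
  have hyρ : y ∈ closedBall x₀ ρ := by
    rw [mem_closedBall, dist_eq_norm]
    exact (lt_of_lt_of_le hyδ (min_le_left _ _)).le
  have hyr₁ : dist y x₀ < r₁ := by
    rw [dist_eq_norm]
    exact lt_of_lt_of_le hyδ ((min_le_right _ _).trans (min_le_left _ _))
  have hyr₂ : dist y x₀ < r₂ := by
    rw [dist_eq_norm]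
    exact lt_of_lt_of_le hyδ ((min_le_right _ _).trans (min_le_right _ _))
  have hyU : y ∈ U := by
    apply hsubU
    rw [mem_closedBall]
    calc dist y x₀ ≤ ρ := by rwa [mem_closedBall] at hyρ
      _ ≤ 2*ρ₀ := by linarith
  have hyr₁' : dist y x₀ < r₁ := hyr₁
  -- bound on u t
  have huη : ‖u t‖ ≤ η := by
    calc ‖u t‖ ≤ N * ‖t‖ := hunorm t ht1
      _ ≤ N * (η/N) := mul_le_mul_of_nonneg_left htηN hN0.le
      _ = η := by field_simp
  -- the core estimate
  have hcore : ∀ (z : Fin n → ℝ) (v' : ι → ℝ) (Cr : ℝ), 0 ≤ Cr →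
      z ∈ U → ‖Θ y z‖ ≤ η → ‖v'‖ ≤ η → (∀ I : ι, |v' I| ≤ N * ‖t‖ ^ (wt I)) →
      ‖z - ψ v' 1 y‖ ≤ Cr * ‖t‖^(m+1) → N + 2*Kc*Cr ≤ CF →
      (∑ I : ι, |Θ y z I| ^ ((wt I : ℝ)⁻¹)) ≤ ((Fintype.card ι : ℝ) * CF) * ‖t‖ := by
    intro z v' Cr hCr hzU hΘη hv'η hv'b hrepz hCrCF
    have hψw : ψ (Θ y z) 1 y = z := hΘ y hyU z hzU
    have hest : ‖Θ y z - v'‖ ≤ 2*Kc*(Cr * ‖t‖^(m+1)) := by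
      have h1 := hkey (Θ y z) v' hΘη hv'η y hyρ
      rw [hψw] at h1
      refine le_trans h1 (mul_le_mul_of_nonneg_left hrepz (by nlinarith))
    have hwI : ∀ I : ι, |Θ y z I| ≤ (CF * ‖t‖) ^ (wt I) := by
      intro I
      have h1 : |Θ y z I - v' I| ≤ ‖Θ y z - v'‖ := by
        have := norm_le_pi_norm (Θ y z - v') I
        rwa [Real.norm_eq_abs] at this
      have h2 : ‖t‖^(m+1) ≤ ‖t‖^(wt I) :=
        pow_le_pow_of_le_one (norm_nonneg t) ht1 (by linarith [(hwt I).2])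
      have h3 : |Θ y z I| ≤ (N + 2*Kc*Cr) * ‖t‖^(wt I) := by
        have := hv'b I
        have habs : |Θ y z I| ≤ |v' I| + |Θ y z I - v' I| := by
          have := abs_add_le (v' I) (Θ y z I - v' I)
          simpa using this
        have h2Kc : (0:ℝ) ≤ 2*Kc := by linarith
        have h4 : 2*Kc*(Cr * ‖t‖^(m+1)) ≤ 2*Kc*Cr * ‖t‖^(wt I) := by
          nlinarith [mul_le_mul_of_nonneg_left h2 (mul_nonneg h2Kc hCr)]
        nlinarith [h1, hest]
      have h5 : (N + 2*Kc*Cr) * ‖t‖^(wt I) ≤ CF^(wt I) * ‖t‖^(wt I) := by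
        refine mul_le_mul_of_nonneg_right (le_trans hCrCF ?_) (by positivity)
        exact le_self_pow₀ hCF1 (Nat.one_le_iff_ne_zero.mp (hwt I).1)
      rw [mul_pow]
      exact le_trans h3 h5
    have hrI : ∀ I : ι, |Θ y z I| ^ ((wt I : ℝ)⁻¹) ≤ CF * ‖t‖ := by
      intro I
      have h1 : |Θ y z I| ^ ((wt I : ℝ)⁻¹) ≤ ((CF * ‖t‖) ^ (wt I)) ^ ((wt I : ℝ)⁻¹) :=
        Real.rpow_le_rpow (abs_nonneg _) (hwI I) (by positivity)
      rwa [Real.pow_rpow_inv_natCast (by positivity) (Nat.one_le_iff_ne_zero.mp (hwt I).1)] at h1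
    calc (∑ I : ι, |Θ y z I| ^ ((wt I : ℝ)⁻¹)) ≤ ∑ _I : ι, CF * ‖t‖ :=
          Finset.sum_le_sum fun I _ => hrI I
      _ = (Fintype.card ι : ℝ) * (CF * ‖t‖) := by
          rw [Finset.sum_const, Finset.card_univ, nsmul_eq_mul]
      _ = ((Fintype.card ι : ℝ) * CF) * ‖t‖ := by ring
  constructor
  · -- the γ case
    obtain ⟨hγmem, hγΘ⟩ := hr₁ y t hyr₁ htr₁
    have hγU : γ y t ∈ U := hsubU (ball_subset_closedBall hγmem)
    have hrepz : ‖γ y t - ψ (u t) 1 y‖ ≤ C₀ * ‖t‖^(m+1) := by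
      rw [← hφψ t y]
      exact hrepB y hyU t htε₀
    have := hcore (γ y t) (u t) C₀ hC₀pos.le hγU hγΘ.le huη (hubound t ht1) hrepz
      (le_max_left _ _)
    refine le_trans this ?_
    have : (0:ℝ) ≤ ‖t‖ := norm_nonneg t
    nlinarith
  · -- the γinv case
    obtain ⟨hγmem, hγΘ⟩ := hr₂ y t hyr₂ htr₂
    have hγU : γinv y t ∈ U := hsubU (ball_subset_closedBall hγmem)
    have hv'η : ‖-(u t)‖ ≤ η := by rwa [norm_neg]
    have hv'b : ∀ I : ι, |(-(u t)) I| ≤ N * ‖t‖ ^ (wt I) := by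
      intro I
      have := hubound t ht1 I
      simpa [abs_neg] using this
    have hrepz : ‖γinv y t - ψ (-(u t)) 1 y‖ ≤ C₀' * ‖t‖^(m+1) := by
      rw [← hφ'ψ t y]
      exact hrepB' y hyU t htε₀'
    have := hcore (γinv y t) (-(u t)) C₀' hC₀'pos.le hγU hγΘ.le hv'η hv'b hrepz
      (le_trans (le_max_left _ _) (le_max_right _ _))
    refine le_trans this ?_
    have : (0:ℝ) ≤ ‖t‖ := norm_nonneg t
    nlinarith
end
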